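/- arXiv:2306.17599 — 8 statements merged into one kernel-verified Lean document; each statement's English description precedes it below -/
import Mathlib

section
/- In the polynomial ring R[X], where R = F_q[x_1,…,x_n], the polynomial f_n(X) divides Δ_n(X). -/
open Polynomial MvPolynomial Matrix Finset

/-- In `R[X]`, where `R = F_q[x_1,…,x_n]` with `q = p^m`, the polynomial
`f_n(X) = ∏_{k ∈ F_q^n} (X - Σ k_i x_i)` divides the determinant `Δ_n(X)` of the
`(n+1)×(n+1)` matrix whose `(r,c)` entry is `x_c^{q^r}` for `c ≤ n` and `X^{q^r}`
for the last column. -/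
theorem f_dvd_Delta (p m n : ℕ) [Fact p.Prime] [Fintype (GaloisField p m)] (hm : 1 ≤ m) (hn : 1 ≤ n) :
    (∏ k : Fin n → GaloisField p m,
        (Polynomial.X -
          Polynomial.C (∑ i, MvPolynomial.C (k i) * MvPolynomial.X i))) ∣
      Matrix.det (Matrix.of fun r c : Fin (n + 1) =>
        if h : (c : ℕ) < n then
          Polynomial.C
            ((MvPolynomial.X ⟨(c : ℕ), h⟩ : MvPolynomial (Fin n) (GaloisField p m)) ^
              (p ^ m) ^ (r : ℕ))
        else
          (Polynomial.X : Polynomial (MvPolynomial (Fin n) (GaloisField p m))) ^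
            (p ^ m) ^ (r : ℕ)) := by
  classical
  set M : Matrix (Fin (n+1)) (Fin (n+1)) (Polynomial (MvPolynomial (Fin n) (GaloisField p m))) :=
    Matrix.of fun r c : Fin (n + 1) =>
        if h : (c : ℕ) < n then
          Polynomial.C ((MvPolynomial.X ⟨(c : ℕ), h⟩ : MvPolynomial (Fin n) (GaloisField p m)) ^ (p ^ m) ^ (r : ℕ))
        else
          (Polynomial.X : Polynomial (MvPolynomial (Fin n) (GaloisField p m))) ^ (p ^ m) ^ (r : ℕ) with hM
  set α : (Fin n → GaloisField p m) → MvPolynomial (Fin n) (GaloisField p m) := fun k => ∑ i, MvPolynomial.C (k i) * MvPolynomial.X i with hα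
  have hcard : Fintype.card (GaloisField p m) = p ^ m := by
    rw [← Nat.card_eq_fintype_card, GaloisField.card p m (by omega)]
  have hfix : ∀ (a : GaloisField p m) (r : ℕ), a ^ (p ^ m) ^ r = a := by
    intro a r
    rw [← hcard]
    exact FiniteField.pow_card_pow r a
  -- each root
  have hroot : ∀ k : Fin n → GaloisField p m, (Polynomial.X - Polynomial.C (α k)) ∣ M.det := by
    intro k
    rw [Polynomial.dvd_iff_isRoot, Polynomial.IsRoot, ← Polynomial.coe_evalRingHom,
      RingHom.map_det]
    set φ := Polynomial.evalRingHom (α k)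
    set N := M.map φ with hN
    have hNent : ∀ (r c : Fin (n+1)), N r c =
        if h : (c : ℕ) < n then (MvPolynomial.X ⟨(c : ℕ), h⟩ : MvPolynomial (Fin n) (GaloisField p m)) ^ (p ^ m) ^ (r : ℕ)
        else ∑ i, MvPolynomial.C (k i) * (MvPolynomial.X i : MvPolynomial (Fin n) (GaloisField p m)) ^ (p ^ m) ^ (r : ℕ) := by
      intro r c
      by_cases h : (c : ℕ) < n
      · simp [hN, hM, h, φ, Matrix.map_apply]
      · simp only [hN, hM, Matrix.map_apply, Matrix.of_apply, h, dif_neg, not_false_iff]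
        rw [map_pow]
        simp only [φ, Polynomial.coe_evalRingHom, Polynomial.eval_X]
        rw [hα]
        simp only [← pow_mul]
        rw [sum_pow_char_pow]
        congr 1
        ext i
        rw [mul_pow, ← map_pow, pow_mul, hfix]
    -- last column is a combination of the others
    set cf : Fin (n+1) → MvPolynomial (Fin n) (GaloisField p m) := fun j =>
      if h : (j : ℕ) < n then MvPolynomial.C (k ⟨(j : ℕ), h⟩) else 0 with hcf
    have hcol : N = N.updateCol (Fin.last n) (fun r => ∑ j, cf j • N r j) := by
      refine Matrix.ext fun r c => ?_
      rw [Matrix.updateCol_apply]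
      by_cases hc : c = Fin.last n
      · subst hc
        rw [if_pos rfl, hNent]
        have hln : ¬ ((Fin.last n : Fin (n+1)) : ℕ) < n := by simp
        rw [dif_neg hln]
        rw [Fin.sum_univ_castSucc]
        have hlast : cf (Fin.last n) • N r (Fin.last n) = 0 := by
          simp [hcf]
        rw [hlast, add_zero]
        apply Finset.sum_congr rfl
        intro i _
        have hi : ((Fin.castSucc i : Fin (n+1)) : ℕ) < n := by simp [i.isLt]
        rw [hcf, hNent]
        simp only [dif_pos hi, smul_eq_mul]
        congr 1
      · rw [if_neg hc]
    have : N.det = 0 := by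
      conv_lhs => rw [hcol]
      rw [Matrix.det_updateCol_sum]
      simp [hcf]
    exact this
  -- assemble divisibility
  suffices h : (∏ k : Fin n → GaloisField p m, (Polynomial.X - Polynomial.C (α k))) ∣ M.det by
    simpa only [hα] using h
  rcases eq_or_ne M.det 0 with h0 | h0
  · rw [h0]; exact dvd_zero _
  have hinj : Function.Injective α := by
    intro k k' hkk
    funext i
    have := congrArg (MvPolynomial.eval (Pi.single i 1 : Fin n → GaloisField p m)) hkk
    simpa [hα, map_sum, Pi.single_apply, mul_ite, Finset.sum_ite_eq'] using this
  have hs : ((Finset.univ.image α).val : Multiset (MvPolynomial (Fin n) (GaloisField p m))) ≤ M.det.roots := by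
    rw [Multiset.le_iff_subset (Finset.univ.image α).nodup]
    intro a ha
    rw [Finset.mem_val, Finset.mem_image] at ha
    obtain ⟨k, _, rfl⟩ := ha
    rw [Polynomial.mem_roots h0]
    exact Polynomial.dvd_iff_isRoot.mp (hroot k)
  calc (∏ k : Fin n → GaloisField p m, (Polynomial.X - Polynomial.C (α k)))
      = ∏ a ∈ Finset.univ.image α, (Polynomial.X - Polynomial.C a) := by
        rw [Finset.prod_image (fun x _ y _ h => hinj h)]
    _ = ((Finset.univ.image α).val.map fun a => Polynomial.X - Polynomial.C a).prod := by
        rw [Finset.prod_eq_multiset_prod]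
    _ ∣ (M.det.roots.map fun a => Polynomial.X - Polynomial.C a).prod :=
        Multiset.prod_dvd_prod_of_le (Multiset.map_le_map hs)
    _ ∣ M.det := M.det.prod_multiset_X_sub_C_dvd
end

section
/- In the polynomial ring R[X], where R = F_q[x_1,…,x_n], one has the identity Δ_n(X) = Δ_{n,n} · f_n(X). -/
open Polynomial

lemma prod_X_sub_C_dvd_of_forall_isRoot {R : Type*} [CommRing R] [IsDomain R]
    (s : Finset R) (f : R[X]) (h : ∀ a ∈ s, f.eval a = 0) :
    (∏ a ∈ s, (X - C a)) ∣ f := by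
  classical
  induction s using Finset.induction_on generalizing f with
  | empty => simpa using one_dvd f
  | @insert a s ha ih =>
    obtain ⟨g, hg⟩ := (dvd_iff_isRoot (p := f) (a := a)).2 (h a (s.mem_insert_self a))
    have hgroot : ∀ b ∈ s, g.eval b = 0 := by
      intro b hb
      have hb' := h b (Finset.mem_insert_of_mem hb)
      rw [hg, eval_mul, eval_sub, eval_X, eval_C, mul_eq_zero] at hb'
      rcases hb' with h1 | h1
      · exact absurd (sub_eq_zero.mp h1) (fun hba => ha (hba ▸ hb))
      · exact h1
    rw [Finset.prod_insert ha, hg]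
    exact mul_dvd_mul_left _ (ih g hgroot)

/-- In `R[X]`, where `R = F_q[x_1,…,x_n]` with `q = p^m`, one has
`Δ_n(X) = Δ_{n,n} · f_n(X)`, where `Δ_n(X)` is the determinant of the `(n+1)×(n+1)`
matrix with `(r,c)` entry `x_c^{q^r}` (last column `X^{q^r}`), `Δ_{n,n}` is the
determinant of the `n×n` matrix with `(r,c)` entry `x_c^{q^r}` for `0 ≤ r ≤ n-1`,
and `f_n(X) = ∏_{k ∈ F_q^n} (X - Σ k_i x_i)`. -/
theorem Delta_eq_Delta_nn_mul_f (p m n : ℕ) [Fact p.Prime]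
    [Fintype (GaloisField p m)] (hm : 1 ≤ m) (hn : 1 ≤ n) :
    Matrix.det (Matrix.of fun r c : Fin (n + 1) =>
        if h : (c : ℕ) < n then
          Polynomial.C
            ((MvPolynomial.X ⟨(c : ℕ), h⟩ : MvPolynomial (Fin n) (GaloisField p m)) ^
              (p ^ m) ^ (r : ℕ))
        else
          (Polynomial.X : Polynomial (MvPolynomial (Fin n) (GaloisField p m))) ^
            (p ^ m) ^ (r : ℕ)) =
      Polynomial.C
        (Matrix.det (Matrix.of fun r c : Fin n =>
          (MvPolynomial.X c : MvPolynomial (Fin n) (GaloisField p m)) ^ (p ^ m) ^ (r : ℕ))) *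
      ∏ k : Fin n → GaloisField p m,
        (Polynomial.X - Polynomial.C (∑ i, MvPolynomial.C (k i) * MvPolynomial.X i)) := by
  classical
  set F := GaloisField p m
  set R := MvPolynomial (Fin n) F
  set q : ℕ := p ^ m with hq
  have hp2 : 2 ≤ p := (Fact.out : p.Prime).two_le
  have hq2 : 2 ≤ q := le_trans hp2 (Nat.le_self_pow (by omega) p)
  have hcard : Fintype.card F = q := by
    rw [← Nat.card_eq_fintype_card]; exact GaloisField.card p m (by omega)
  set A : Matrix (Fin (n+1)) (Fin (n+1)) R[X] := Matrix.of (fun r c : Fin (n + 1) =>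
    if h : (c : ℕ) < n then
      C ((MvPolynomial.X ⟨(c : ℕ), h⟩ : R) ^ q ^ (r : ℕ))
    else (X : R[X]) ^ q ^ (r : ℕ)) with hA
  set Δ : R := Matrix.det (Matrix.of fun r c : Fin n =>
      (MvPolynomial.X c : R) ^ q ^ (r : ℕ)) with hΔ
  set a : (Fin n → F) → R := fun k => ∑ i, MvPolynomial.C (k i) * MvPolynomial.X i with ha
  set f : R[X] := ∏ k : Fin n → F, (X - C (a k)) with hf
  -- Step 1: every `a k` is a root of `det A`
  have hroot : ∀ k : Fin n → F, (A.det).eval (a k) = 0 := by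
    intro k
    rw [show (A.det).eval (a k) = (A.map (evalRingHom (a k))).det from
      RingHom.map_det (evalRingHom (a k)) A]
    set B : Matrix (Fin (n+1)) (Fin (n+1)) R := A.map (evalRingHom (a k)) with hB
    have hBent : ∀ r c : Fin (n+1), B r c =
        if h : (c : ℕ) < n then (MvPolynomial.X ⟨(c : ℕ), h⟩ : R) ^ q ^ (r : ℕ)
        else (a k) ^ q ^ (r : ℕ) := by
      intro r c
      by_cases h : (c : ℕ) < n <;> simp [hB, hA, h, Matrix.map_apply]
    have hfrob : ∀ r : ℕ,
        (a k) ^ q ^ r = ∑ i, MvPolynomial.C (k i) * (MvPolynomial.X i : R) ^ q ^ r := by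
      intro r
      have hqr : q ^ r = p ^ (m * r) := by rw [hq, ← pow_mul]
      rw [ha, hqr, sum_pow_char_pow]
      refine Finset.sum_congr rfl fun i _ => ?_
      rw [mul_pow, ← map_pow, ← hqr]
      congr 2
      rw [← hcard]
      exact FiniteField.pow_card_pow r (k i)
    set c : Fin (n+1) → R := fun i =>
      if h : (i : ℕ) < n then MvPolynomial.C (k ⟨(i : ℕ), h⟩) else 0 with hc
    have h1 : B.updateCol (Fin.last n) (fun r => ∑ i, c i • B r i) = B := by
      refine Matrix.ext fun r j => ?_
      by_cases hj : j = Fin.last n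
      · subst hj
        rw [Matrix.updateCol_self, hBent r (Fin.last n),
          dif_neg (by simp), hfrob (r : ℕ), Fin.sum_univ_castSucc]
        have hlast : c (Fin.last n) = 0 := by
          rw [hc]; exact dif_neg (by simp)
        rw [hlast, zero_smul, add_zero]
        refine Finset.sum_congr rfl fun i _ => ?_
        have hi : ((Fin.castSucc i : Fin (n+1)) : ℕ) < n := i.isLt
        have hieq : (⟨((Fin.castSucc i : Fin (n+1)) : ℕ), hi⟩ : Fin n) = i := Fin.ext (by simp)
        rw [hBent r (Fin.castSucc i), hc]
        simp only [dif_pos hi, smul_eq_mul, hieq]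
      · rw [Matrix.updateCol_ne hj]
    have h2 := Matrix.det_updateCol_sum B (Fin.last n) c
    rw [h1] at h2
    have hclast : c (Fin.last n) = 0 := by rw [hc]; exact dif_neg (by simp)
    rw [hclast, zero_smul] at h2
    exact h2
  -- Step 2: the roots `a k` are pairwise distinct
  have hainj : Function.Injective a := by
    intro k k' hkk'
    funext i
    have := congrArg (MvPolynomial.eval (Pi.single i (1 : F))) hkk'
    simpa [ha, map_sum, Pi.single_apply, Finset.sum_ite_eq', mul_ite] using this
  -- Step 3: f divides det A
  have hdvd : f ∣ A.det := by
    have := prod_X_sub_C_dvd_of_forall_isRoot (Finset.univ.image a) A.det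
      (fun b hb => by
        obtain ⟨k, _, rfl⟩ := Finset.mem_image.mp hb
        exact hroot k)
    rwa [Finset.prod_image (fun x _ y _ h => hainj h)] at this
  -- Step 4: f is monic of degree q ^ n
  have hfmonic : f.Monic := monic_prod_of_monic _ _ (fun k _ => monic_X_sub_C _)
  have hfdeg : f.natDegree = q ^ n := by
    rw [hf, natDegree_prod_of_monic _ _ (fun k _ => monic_X_sub_C _)]
    simp [natDegree_X_sub_C, hcard]
  -- Step 5: Laplace expansion along the last column
  have hexp : A.det = ∑ i : Fin (n+1),
      (-1) ^ ((i : ℕ) + n) * X ^ q ^ (i : ℕ) *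
        C (Matrix.det (Matrix.of (fun r s : Fin n =>
          (MvPolynomial.X s : R) ^ q ^ ((i.succAbove r : Fin (n+1)) : ℕ)))) := by
    rw [Matrix.det_succ_column A (Fin.last n)]
    refine Finset.sum_congr rfl fun i _ => ?_
    have hlast : A i (Fin.last n) = X ^ q ^ (i : ℕ) := by
      rw [hA]; exact dif_neg (by simp)
    have hsub : A.submatrix i.succAbove (Fin.last n).succAbove =
        (RingHom.mapMatrix (C : R →+* R[X])) (Matrix.of (fun r s : Fin n =>
          (MvPolynomial.X s : R) ^ q ^ ((i.succAbove r : Fin (n+1)) : ℕ))) := by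
      refine Matrix.ext fun r s => ?_
      have hs : ((Fin.castSucc s : Fin (n+1)) : ℕ) < n := s.isLt
      simp only [Matrix.submatrix_apply, Fin.succAbove_last, hA, Matrix.of_apply,
        RingHom.mapMatrix_apply, Matrix.map_apply, dif_pos hs]
      rw [show (⟨((Fin.castSucc s : Fin (n+1)) : ℕ), hs⟩ : Fin n) = s from Fin.ext (by simp)]
    rw [hlast, hsub, ← RingHom.map_det, Fin.val_last]
  -- Step 6: coefficient of det A at q ^ n is Δ
  have hterm : ∀ (e N : ℕ) (d : R),
      (((-1 : R[X]) ^ e * X ^ N * C d).coeff (q ^ n)) =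
        if q ^ n = N then (-1) ^ e * d else 0 := by
    intro e N d
    have : ((-1 : R[X]) ^ e * X ^ N * C d) = C ((-1) ^ e * d) * X ^ N := by
      rw [map_mul, map_pow, map_neg, map_one]; ring
    rw [this, coeff_C_mul_X_pow]
  have hcoeff : (A.det).coeff (q ^ n) = Δ := by
    rw [hexp, finset_sum_coeff]
    rw [Finset.sum_eq_single (Fin.last n)]
    · have hmat : (Matrix.of (fun r s : Fin n =>
          (MvPolynomial.X s : R) ^ q ^ (((Fin.last n).succAbove r : Fin (n+1)) : ℕ))) =
          Matrix.of fun r s : Fin n => (MvPolynomial.X s : R) ^ q ^ (r : ℕ) := by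
        refine Matrix.ext fun r s => ?_; simp [Fin.succAbove_last]
      rw [hterm, hmat, if_pos (by rw [Fin.val_last]), Fin.val_last,
        Even.neg_one_pow ⟨n, rfl⟩, one_mul, hΔ]
    · intro i _ hi
      rw [hterm]
      refine if_neg fun h => hi (Fin.ext ?_)
      exact Nat.pow_right_injective hq2 h.symm
    · intro h; exact absurd (Finset.mem_univ _) h
  -- Step 7: degree bound
  have hdeg : (A.det).natDegree ≤ q ^ n := by
    rw [hexp]
    refine natDegree_sum_le_of_forall_le _ _ fun i _ => ?_
    calc ((-1) ^ ((i : ℕ) + n) * X ^ q ^ (i : ℕ) * C _ : R[X]).natDegree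
        ≤ ((-1) ^ ((i : ℕ) + n) * X ^ q ^ (i : ℕ) : R[X]).natDegree + (C _ : R[X]).natDegree :=
          natDegree_mul_le
      _ ≤ q ^ (i : ℕ) := by
          rw [natDegree_C, add_zero]
          calc ((-1) ^ ((i : ℕ) + n) * X ^ q ^ (i : ℕ) : R[X]).natDegree
              ≤ ((-1 : R[X]) ^ ((i : ℕ) + n)).natDegree + (X ^ q ^ (i : ℕ) : R[X]).natDegree :=
                natDegree_mul_le
            _ ≤ q ^ (i : ℕ) := by
                simp [natDegree_X_pow]
      _ ≤ q ^ n := Nat.pow_le_pow_right (by omega) (Nat.le_of_lt_succ i.isLt)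
  -- Step 8: conclude
  have hkey : A.det = C (A.det).leadingCoeff * f :=
    eq_leadingCoeff_mul_of_monic_of_dvd_of_natDegree_le hfmonic hdvd (hfdeg ▸ hdeg)
  have hlead : (A.det).leadingCoeff = Δ := by
    have := congrArg (fun g : R[X] => g.coeff (q ^ n)) hkey
    rw [hcoeff, coeff_C_mul] at this
    have hfc : f.coeff (q ^ n) = 1 := by
      rw [← hfdeg]; exact hfmonic.coeff_natDegree
    rw [hfc, mul_one] at this
    exact this.symm
  rw [hkey, hlead]
  simp only [hf, ha]
  congr!
end

section
/- The polynomial f_n(X) ∈ R[X] is monic of degree q^n in X, and for every natural number k that is not of the form q^i for some 0 ≤ i ≤ n, the coefficient of X^k in f_n(X) is zero. -/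
open Polynomial Finset

variable {K : Type*} [Field K] [Fintype K]

private lemma prodXsubC_univ : ∏ a : K, (X - C a) = X ^ Fintype.card K - X := by
  have hmon : (X ^ Fintype.card K - X : K[X]).Monic := by
    apply monic_X_pow_sub
    rw [degree_X]
    exact_mod_cast Fintype.one_lt_card
  have hroots := FiniteField.roots_X_pow_card_sub_X K
  have hdeg := FiniteField.X_pow_card_sub_X_natDegree_eq K (Fintype.one_lt_card (α := K))
  have hcard : Multiset.card (X ^ Fintype.card K - X : K[X]).roots
      = (X ^ Fintype.card K - X : K[X]).natDegree := by
    rw [hroots, hdeg, ← Finset.card_def, Finset.card_univ]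
  have h := prod_multiset_X_sub_C_of_monic_of_roots_card_eq hmon hcard
  rw [← h, hroots]
  rfl

private lemma prod_lin {F : Type*} [Field F] (j : K →+* F) (u : F) (hu : u ≠ 0) :
    ∏ c : K, (X - C (j c * u)) =
      X ^ Fintype.card K - C (u ^ (Fintype.card K - 1)) * X := by
  set q := Fintype.card K with hqdef
  have hq1 : q - 1 + 1 = q := Nat.succ_pred_eq_of_pos Fintype.card_pos
  have hθ : ∏ c : K, (C u⁻¹ * X - C (j c)) = (C u⁻¹ * X) ^ q - C u⁻¹ * X := by
    have h0 := congrArg (eval₂RingHom ((C : F →+* F[X]).comp j) (C u⁻¹ * X))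
      (prodXsubC_univ (K := K))
    simpa only [map_prod, map_sub, map_pow, coe_eval₂RingHom, eval₂_X, eval₂_C,
      RingHom.comp_apply] using h0
  calc ∏ c : K, (X - C (j c * u))
      = ∏ c : K, (C u * (C u⁻¹ * X - C (j c))) := by
        refine Finset.prod_congr rfl fun c _ => ?_
        rw [mul_sub, ← mul_assoc, ← C_mul, mul_inv_cancel₀ hu, C_1, one_mul, ← C_mul,
          mul_comm u]
    _ = C u ^ q * ∏ c : K, (C u⁻¹ * X - C (j c)) := by
        rw [Finset.prod_mul_distrib, Finset.prod_const, Finset.card_univ]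
    _ = C u ^ q * ((C u⁻¹ * X) ^ q - C u⁻¹ * X) := by rw [hθ]
    _ = X ^ q - C (u ^ (q - 1)) * X := by
        rw [mul_sub, mul_pow, ← mul_assoc, ← mul_pow, ← C_mul, mul_inv_cancel₀ hu, C_1,
          one_pow, one_mul, ← mul_assoc, ← C_pow, ← C_mul]
        congr 3
        conv_lhs => rw [← hq1]
        rw [pow_succ, mul_assoc, mul_inv_cancel₀ hu, mul_one]

private lemma keyPoly :
    (∏ c : K, (X - C (C c * X)) : Polynomial (Polynomial K)) =
      X ^ Fintype.card K - C ((X : Polynomial K) ^ (Fintype.card K - 1)) * X := by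
  set F := FractionRing (Polynomial K)
  have hinj : Function.Injective (algebraMap (Polynomial K) F) :=
    IsFractionRing.injective _ _
  apply Polynomial.map_injective _ hinj
  have hu : algebraMap (Polynomial K) F X ≠ 0 := fun h => X_ne_zero (hinj (by simpa using h))
  have h := prod_lin ((algebraMap (Polynomial K) F).comp (C : K →+* Polynomial K))
    (algebraMap (Polynomial K) F X) hu
  simpa only [Polynomial.map_prod, Polynomial.map_sub, Polynomial.map_pow,
    Polynomial.map_mul, Polynomial.map_X, Polynomial.map_C, map_mul, map_pow,
    C_mul, C_pow, RingHom.comp_apply] using h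

private lemma keyR {R : Type*} [CommRing R] [Algebra K R] (t : R) (g : Polynomial R) :
    ∏ c : K, (g - C (c • t)) =
      g ^ Fintype.card K - C (t ^ (Fintype.card K - 1)) * g := by
  have h1 := congrArg (Polynomial.mapRingHom ((Polynomial.aeval t : Polynomial K →ₐ[K] R)
    : Polynomial K →+* R)) (keyPoly (K := K))
  simp only [map_prod, map_sub, map_pow, map_mul, coe_mapRingHom, Polynomial.map_X,
    Polynomial.map_C, Polynomial.map_pow, Polynomial.map_sub, Polynomial.map_mul,
    AlgHom.coe_toRingHom, map_pow, aeval_X, aeval_C] at h1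
  have h2 := congrArg (Polynomial.eval₂RingHom (C : R →+* Polynomial R) g) h1
  simpa only [map_prod, map_sub, map_pow, map_mul, coe_eval₂RingHom, eval₂_X, eval₂_C,
    Algebra.smul_def] using h2

private lemma mainLemma (p mm : ℕ) [Fact p.Prime] (hq : Fintype.card K = p ^ mm)
    {R : Type*} [CommRing R] [Algebra K R] [CharP R p] (n : ℕ) :
    ∀ v : Fin n → R, ∃ a : ℕ → R, a n = 1 ∧
      ∏ k : Fin n → K, (X - C (∑ i, k i • v i)) =
        ∑ i ∈ Finset.range (n + 1), C (a i) * X ^ (p ^ mm) ^ i := by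
  induction n with
  | zero =>
      intro v
      refine ⟨fun _ => 1, rfl, ?_⟩
      simp
  | succ n ih =>
      intro v
      obtain ⟨a, han, hG⟩ := ih fun i => v i.succ
      set q := p ^ mm with hqdef
      have hcK : ∀ (c : K) (i : ℕ), c ^ q ^ i = c := by
        intro c i
        rw [← hq]
        exact FiniteField.pow_card_pow i c
      set G : Polynomial R := ∏ k : Fin n → K, (X - C (∑ i, k i • v i.succ)) with hGdef
      set w : R := ∑ i ∈ Finset.range (n + 1), a i * v 0 ^ q ^ i with hwdef
      -- Step 1 : reindex the product over `Fin (n+1) → K`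
      have h1 : ∏ k : Fin (n + 1) → K, (X - C (∑ i, k i • v i)) =
          ∏ c : K, ∏ k : Fin n → K,
            (X - C (c • v 0 + ∑ i, k i • v i.succ)) := by
        rw [← Equiv.prod_comp (Fin.consEquiv fun _ : Fin (n + 1) => K)
          (fun k : Fin (n + 1) → K => X - C (∑ i, k i • v i)), Fintype.prod_prod_type]
        refine Finset.prod_congr rfl fun c _ => Finset.prod_congr rfl fun k _ => ?_
        congr 1
        rw [Fin.sum_univ_succ]
        simp [Fin.consEquiv]
      -- Step 2 : each inner product equals `G - C (c • w)`
      have h3 : ∀ c : K, (∏ k : Fin n → K, (X - C (c • v 0 + ∑ i, k i • v i.succ))) =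
          G - C (c • w) := by
        intro c
        have hcomp : (∏ k : Fin n → K, (X - C (c • v 0 + ∑ i, k i • v i.succ))) =
            eval₂RingHom (C : R →+* Polynomial R) (X - C (c • v 0)) G := by
          rw [hGdef, map_prod]
          refine Finset.prod_congr rfl fun k _ => ?_
          simp only [coe_eval₂RingHom, eval₂_sub, eval₂_X, eval₂_C]
          rw [map_add, sub_sub]
        rw [hcomp, hG, map_sum]
        have hterm : ∀ i ∈ Finset.range (n + 1),
            eval₂RingHom (C : R →+* Polynomial R) (X - C (c • v 0)) (C (a i) * X ^ q ^ i)
              = C (a i) * X ^ q ^ i - C (a i * (c • v 0 ^ q ^ i)) := by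
          intro i _
          simp only [coe_eval₂RingHom, eval₂_mul, eval₂_C, eval₂_X_pow]
          have hpi : (q : ℕ) ^ i = p ^ (mm * i) := by rw [hqdef, ← pow_mul]
          rw [hpi, sub_pow_char_pow, ← hpi, ← C_pow]
          have hsc : (c • v 0) ^ q ^ i = c • v 0 ^ q ^ i := by
            rw [Algebra.smul_def, mul_pow, ← map_pow, hcK, Algebra.smul_def]
          rw [hsc, mul_sub, ← C_mul]
        rw [Finset.sum_congr rfl hterm, Finset.sum_sub_distrib, ← hG]
        congr 1
        rw [← map_sum]
        congr 1
        rw [hwdef, Finset.smul_sum]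
        exact Finset.sum_congr rfl fun i _ => mul_smul_comm _ _ _
      -- Step 3 : outer product via the key identity
      have h4 : (∏ c : K, (G - C (c • w))) = G ^ q - C (w ^ (q - 1)) * G := by
        have h := keyR (K := K) w G
        rwa [hq] at h
      -- Step 4 : Frobenius expansion of `G ^ q`
      have h5 : G ^ q = ∑ i ∈ Finset.range (n + 1), C (a i ^ q) * X ^ q ^ (i + 1) := by
        rw [hG, hqdef, sum_pow_char_pow]
        refine Finset.sum_congr rfl fun i _ => ?_
        rw [mul_pow, ← C_pow, ← pow_mul, ← pow_succ]
      -- assemble the coefficients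
      refine ⟨fun j => (if j = 0 then 0 else a (j - 1) ^ q)
        - w ^ (q - 1) * (if j ≤ n then a j else 0), ?_, ?_⟩
      · simp [han]
      · have hS1 : ∑ j ∈ Finset.range (n + 2),
            C (if j = 0 then (0 : R) else a (j - 1) ^ q) * X ^ q ^ j
            = ∑ i ∈ Finset.range (n + 1), C (a i ^ q) * X ^ q ^ (i + 1) := by
          rw [Finset.sum_range_succ']
          simp
        have hS2 : ∑ j ∈ Finset.range (n + 2),
            C (w ^ (q - 1) * if j ≤ n then a j else 0) * X ^ q ^ j
            = C (w ^ (q - 1)) * ∑ i ∈ Finset.range (n + 1), C (a i) * X ^ q ^ i := by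
          rw [Finset.sum_range_succ, Finset.mul_sum,
            if_neg (Nat.not_succ_le_self n), mul_zero, map_zero, zero_mul, add_zero]
          refine Finset.sum_congr rfl fun j hj => ?_
          rw [if_pos (Nat.lt_succ_iff.mp (Finset.mem_range.mp hj)), C_mul, mul_assoc]
        calc ∏ k : Fin (n + 1) → K, (X - C (∑ i, k i • v i))
            = ∏ c : K, (G - C (c • w)) := by
              rw [h1]; exact Finset.prod_congr rfl fun c _ => h3 c
          _ = G ^ q - C (w ^ (q - 1)) * G := h4
          _ = _ := by
              rw [h5, hG, ← hS1, ← hS2, ← Finset.sum_sub_distrib]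
              refine Finset.sum_congr rfl fun j _ => ?_
              rw [map_sub, sub_mul]

/-- `f_n(X) = ∏_{(k_1,…,k_n) ∈ F_q^n} (X − Σ_i k_i x_i) ∈ R[X]`, where
`R = F_q[x_1,…,x_n]` and `F_q = GaloisField p m`. -/
noncomputable def dicksonF (p m n : ℕ) [Fact p.Prime] [Fintype (GaloisField p m)] :
    Polynomial (MvPolynomial (Fin n) (GaloisField p m)) :=
  ∏ k : Fin n → GaloisField p m,
    (Polynomial.X - Polynomial.C (∑ i, MvPolynomial.C (k i) * MvPolynomial.X i))

/-- `f_n(X)` is monic of degree `q^n` in `X`, and for every natural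
number `k` not of the form `q^i` with `0 ≤ i ≤ n`, the coefficient of `X^k` in
`f_n(X)` is zero. -/
theorem f_monic_degree_and_coeffs (p m n : ℕ) [Fact p.Prime]
    [Fintype (GaloisField p m)] (hm : 1 ≤ m) (hn : 1 ≤ n) :
    (dicksonF p m n).Monic ∧ (dicksonF p m n).natDegree = (p ^ m) ^ n ∧
      ∀ k : ℕ, (¬ ∃ i ≤ n, k = (p ^ m) ^ i) → (dicksonF p m n).coeff k = 0 := by
  have hm0 : m ≠ 0 := Nat.one_le_iff_ne_zero.mp hm
  have hcard : Fintype.card (GaloisField p m) = p ^ m := by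
    rw [← Nat.card_eq_fintype_card]; exact GaloisField.card p m hm0
  have hmon : (dicksonF p m n).Monic := by
    rw [dicksonF]
    exact monic_prod_of_monic _ _ fun k _ => monic_X_sub_C _
  refine ⟨hmon, ?_, ?_⟩
  · rw [dicksonF, natDegree_prod_of_monic _ _ fun k _ => monic_X_sub_C _]
    simp only [natDegree_X_sub_C]
    rw [Finset.sum_const, Finset.card_univ, smul_eq_mul, mul_one, Fintype.card_fun,
      Fintype.card_fin, hcard]
  · obtain ⟨a, han, hf⟩ := mainLemma p m hcard n (fun i => (MvPolynomial.X i :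
      MvPolynomial (Fin n) (GaloisField p m)))
    intro k hk
    have hd : dicksonF p m n = ∑ i ∈ Finset.range (n + 1), C (a i) * X ^ (p ^ m) ^ i := by
      rw [dicksonF, ← hf]
      refine Finset.prod_congr rfl fun kk _ => ?_
      congr 1
      congr 1
      exact Finset.sum_congr rfl fun i _ => (MvPolynomial.smul_eq_C_mul _ _).symm
    rw [hd, finset_sum_coeff]
    refine Finset.sum_eq_zero fun i hi => ?_
    rw [coeff_C_mul, coeff_X_pow, if_neg, mul_zero]
    exact fun h => hk ⟨i, Nat.lt_succ_iff.mp (Finset.mem_range.mp hi), h⟩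
end

section
/- For every 0 ≤ i ≤ n, one has the identity Δ_{n,i} = Δ_{n,n} · C_{n,i} in R = F_q[x_1,…,x_n]. In particular, Δ_{n,n} divides Δ_{n,i} in R. -/
/-- The Dickson invariant `C_{n,i} := (−1)^{n+i} · (coefficient of X^{q^i} in f_n(X))`. -/
noncomputable def dicksonC (p m n : ℕ) [Fact p.Prime] [Fintype (GaloisField p m)]
    (i : ℕ) : MvPolynomial (Fin n) (GaloisField p m) :=
  (-1) ^ (n + i) * (dicksonF p m n).coeff ((p ^ m) ^ i)

/-- `Δ_{n,i}`: the determinant of the `n×n` matrix with rows indexed by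
`r ∈ {0,…,n} \ {i}` (in increasing order) and columns `c`, with entry `x_c^{q^r}`. -/
noncomputable def DeltaMinor (p m n : ℕ) [Fact p.Prime] (i : ℕ) :
    MvPolynomial (Fin n) (GaloisField p m) :=
  Matrix.det (Matrix.of fun r c : Fin n =>
    (MvPolynomial.X c : MvPolynomial (Fin n) (GaloisField p m)) ^
      (p ^ m) ^ (if (r : ℕ) < i then (r : ℕ) else (r : ℕ) + 1))

open Polynomial

section Aux

variable (p m n : ℕ) [Fact p.Prime] [Fintype (GaloisField p m)]

local notation "K" => GaloisField p m
local notation "R" => MvPolynomial (Fin n) (GaloisField p m)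

/-- The linear form `Σ k_i x_i`. -/
noncomputable def Lform (k : Fin n → K) : R := ∑ i, MvPolynomial.C (k i) * MvPolynomial.X i

/-- The `(n+1)×(n+1)` Moore-type matrix over `R[X]`. -/
noncomputable def bigM : Matrix (Fin (n+1)) (Fin (n+1)) (Polynomial R) :=
  Matrix.of fun r => Fin.cons (Polynomial.X ^ (p ^ m) ^ (r : ℕ))
    (fun c => Polynomial.C ((MvPolynomial.X c : R) ^ (p ^ m) ^ (r : ℕ)))

noncomputable def bigD : Polynomial R := (bigM p m n).det

lemma coe_succAbove (i : Fin (n+1)) (r : Fin n) :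
    ((i.succAbove r : Fin (n+1)) : ℕ) = if (r : ℕ) < (i : ℕ) then (r : ℕ) else (r : ℕ) + 1 := by
  rw [Fin.succAbove]
  split <;> rename_i h <;> simp only [Fin.lt_def, Fin.coe_castSucc] at h
  · rw [if_pos h]; simp
  · rw [if_neg h]; simp

lemma bigD_eq : bigD p m n =
    ∑ i : Fin (n+1),
      Polynomial.C ((-1) ^ (i : ℕ) * DeltaMinor p m n i) * Polynomial.X ^ ((p ^ m) ^ (i : ℕ)) := by
  rw [bigD, Matrix.det_succ_column_zero]
  refine Finset.sum_congr rfl fun i _ => ?_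
  have h1 : (bigM p m n) i 0 = Polynomial.X ^ (p ^ m) ^ (i : ℕ) := rfl
  have h2 : ((bigM p m n).submatrix i.succAbove Fin.succ).det
      = Polynomial.C (DeltaMinor p m n i) := by
    rw [DeltaMinor, RingHom.map_det]
    congr 1
    refine Matrix.ext fun r c => ?_
    simp only [RingHom.mapMatrix_apply, Matrix.map_apply, Matrix.submatrix_apply, bigM,
      Matrix.of_apply, Fin.cons_succ, coe_succAbove, apply_ite, map_pow]
    split_ifs with h <;> simp [h]
  rw [h1, h2, map_mul, map_pow, map_neg, map_one]
  ring

lemma Lform_inj : Function.Injective (Lform p m n) := by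
  intro k k' h
  funext i
  have := congrArg (MvPolynomial.coeff (Finsupp.single i 1)) h
  simpa [Lform, MvPolynomial.coeff_sum, MvPolynomial.coeff_C_mul, MvPolynomial.coeff_X',
    Finsupp.single_left_inj (one_ne_zero), Finset.sum_ite_eq'] using this

lemma Lform_pow (hm : 1 ≤ m) (k : Fin n → K) (r : ℕ) :
    (Lform p m n k) ^ (p ^ m) ^ r
      = ∑ c, MvPolynomial.C (k c) * (MvPolynomial.X c : R) ^ (p ^ m) ^ r := by
  have hcard : Fintype.card K = p ^ m := by
    rw [← Nat.card_eq_fintype_card, GaloisField.card p m (by omega)]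
  have hp : CharP R p := inferInstance
  rw [Lform, show (p ^ m) ^ r = p ^ (m * r) by rw [pow_mul], sum_pow_char_pow]
  refine Finset.sum_congr rfl fun c _ => ?_
  rw [mul_pow, ← map_pow, show p ^ (m * r) = (p ^ m) ^ r by rw [pow_mul], ← hcard,
    FiniteField.pow_card_pow]

lemma bigD_root (hm : 1 ≤ m) (k : Fin n → K) :
    Polynomial.eval (Lform p m n k) (bigD p m n) = 0 := by
  have hev : Polynomial.eval (Lform p m n k) (bigD p m n)
      = ((Polynomial.evalRingHom (Lform p m n k)).mapMatrix (bigM p m n)).det := by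
    rw [bigD, ← Polynomial.coe_evalRingHom, RingHom.map_det]
  set A := ((Polynomial.evalRingHom (Lform p m n k)).mapMatrix (bigM p m n)).transpose with hA
  set g : Fin (n+1) → R := Fin.cons 0 fun c => MvPolynomial.C (k c) with hg
  have hrow : A 0 = ∑ c : Fin (n+1), g c • A c := by
    funext r
    have hAr : ∀ c : Fin n, A (Fin.succ c) r = (MvPolynomial.X c : R) ^ (p ^ m) ^ (r : ℕ) := by
      intro c
      simp [hA, bigM, Matrix.transpose_apply]
    have h0 : A 0 r = (Lform p m n k) ^ (p ^ m) ^ (r : ℕ) := by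
      simp [hA, bigM, Matrix.transpose_apply]
    rw [h0, Lform_pow p m n hm k]
    rw [Finset.sum_apply, Fin.sum_univ_succ]
    simp only [hg, Fin.cons_zero, Fin.cons_succ, Pi.smul_apply, smul_eq_mul, zero_mul,
      zero_smul, Pi.zero_apply, zero_add]
    refine Finset.sum_congr rfl fun c _ => ?_
    rw [hAr c]
  have : A.det = 0 := by
    calc A.det = (A.updateRow 0 (∑ c : Fin (n+1), g c • A c)).det := by
          rw [← hrow, Matrix.updateRow_eq_self]
      _ = g 0 • A.det := Matrix.det_updateRow_sum A 0 g
      _ = 0 := by simp [hg]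
  rw [hev, ← Matrix.det_transpose, this]

lemma prod_X_sub_C_dvd {S : Type*} [CommRing S] [IsDomain S] {ι : Type*} (s : Finset ι)
    (a : ι → S) : ∀ g : Polynomial S, Set.InjOn a s → (∀ i ∈ s, g.IsRoot (a i)) →
    (∏ i ∈ s, (Polynomial.X - Polynomial.C (a i))) ∣ g := by
  classical
  induction s using Finset.induction_on with
  | empty => intro g _ _; simpa using one_dvd g
  | @insert i s hi ih =>
    intro g ha h
    have hroot : g.IsRoot (a i) := h i (Finset.mem_insert_self i s)
    obtain ⟨g₁, hg₁⟩ := (Polynomial.dvd_iff_isRoot).2 hroot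
    rw [Finset.prod_insert hi, hg₁]
    refine mul_dvd_mul_left _ (ih g₁ (ha.mono (by simp [Finset.subset_insert])) ?_)
    intro j hj
    have hji : a j ≠ a i := by
      intro hji
      exact hi (by simpa [ha (by simp [hj]) (by simp) hji] using hj)
    have := h j (Finset.mem_insert_of_mem hj)
    rw [hg₁] at this
    simp only [Polynomial.IsRoot, Polynomial.eval_mul, Polynomial.eval_sub,
      Polynomial.eval_X, Polynomial.eval_C, mul_eq_zero, sub_eq_zero] at this
    exact this.resolve_left hji

lemma dicksonF_monic : (dicksonF p m n).Monic :=
  Polynomial.monic_prod_of_monic _ _ fun k _ => Polynomial.monic_X_sub_C _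

lemma dicksonF_natDegree (hm : 1 ≤ m) : (dicksonF p m n).natDegree = (p ^ m) ^ n := by
  have hcard : Fintype.card K = p ^ m := by
    rw [← Nat.card_eq_fintype_card, GaloisField.card p m (by omega)]
  rw [dicksonF, Polynomial.natDegree_prod_of_monic _ _ fun k _ => Polynomial.monic_X_sub_C _,
    Finset.sum_congr rfl fun k _ => Polynomial.natDegree_X_sub_C _]
  simp [Fintype.card_fun, hcard]

lemma dicksonF_dvd_bigD (hm : 1 ≤ m) : dicksonF p m n ∣ bigD p m n := by
  refine prod_X_sub_C_dvd Finset.univ (Lform p m n) _ ((Lform_inj p m n).injOn) ?_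
  intro k _
  exact bigD_root p m n hm k

lemma bigD_degree_le : (bigD p m n).degree ≤ ((p ^ m) ^ n : ℕ) := by
  rw [bigD_eq]
  refine (Polynomial.degree_sum_le _ _).trans ?_
  rw [Finset.sup_le_iff]
  intro i _
  refine (Polynomial.degree_C_mul_X_pow_le _ _).trans ?_
  exact_mod_cast Nat.pow_le_pow_right (Nat.one_le_pow _ _ (Fact.out : p.Prime).pos)
    (Nat.lt_succ_iff.1 i.isLt)

end Aux


/-- for every `0 ≤ i ≤ n`, `Δ_{n,i} = Δ_{n,n} · C_{n,i}` in
`R = F_q[x_1,…,x_n]`; in particular `Δ_{n,n} ∣ Δ_{n,i}`. -/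
theorem DeltaMinor_eq_DeltaMinor_mul_dicksonC (p m n : ℕ) [Fact p.Prime]
    [Fintype (GaloisField p m)] (hm : 1 ≤ m) (hn : 1 ≤ n) :
    ∀ i ≤ n,
      DeltaMinor p m n i = DeltaMinor p m n n * dicksonC p m n i ∧
        DeltaMinor p m n n ∣ DeltaMinor p m n i := by
  classical
  have hq2 : 2 ≤ p ^ m := le_trans (Fact.out : p.Prime).two_le (Nat.le_self_pow (by omega) p)
  obtain ⟨h, hD⟩ := dicksonF_dvd_bigD p m n hm
  have hf := dicksonF_monic p m n
  have hdegf : (dicksonF p m n).natDegree = (p ^ m) ^ n := dicksonF_natDegree p m n hm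
  -- h is a constant
  have hh : h = Polynomial.C (h.coeff 0) := by
    by_cases h0 : h = 0
    · rw [h0]; simp
    · have hd0 : h.degree ≤ 0 := by
        have h1 : (bigD p m n).degree = (dicksonF p m n).degree + h.degree := by
          rw [hD, Polynomial.degree_mul]
        have h2 : (dicksonF p m n).degree = (((p ^ m) ^ n : ℕ) : WithBot ℕ) := by
          rw [Polynomial.degree_eq_natDegree hf.ne_zero, hdegf]
        have hd : h.degree = (h.natDegree : ℕ) := Polynomial.degree_eq_natDegree h0
        have h3 := bigD_degree_le p m n
        rw [h1, h2, hd, ← Nat.cast_add, Nat.cast_le] at h3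
        rw [hd, show h.natDegree = 0 by omega]
        simp
      exact Polynomial.eq_C_of_degree_le_zero hd0
  set a := h.coeff 0 with ha_def
  -- coefficients of bigD
  have hcoeff : ∀ j : Fin (n+1), (bigD p m n).coeff ((p ^ m) ^ (j : ℕ))
      = (-1) ^ (j : ℕ) * DeltaMinor p m n (j : ℕ) := by
    intro j
    rw [bigD_eq, Polynomial.finset_sum_coeff]
    rw [Finset.sum_eq_single j]
    · rw [Polynomial.coeff_C_mul, Polynomial.coeff_X_pow, if_pos rfl, mul_one]
    · intro i _ hij
      have hne : (p ^ m) ^ (i : ℕ) ≠ (p ^ m) ^ (j : ℕ) := by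
        intro hc
        exact hij (Fin.ext (Nat.pow_right_injective hq2 hc))
      rw [Polynomial.coeff_C_mul, Polynomial.coeff_X_pow, if_neg (Ne.symm hne), mul_zero]
    · simp
  have hfn : (dicksonF p m n).coeff ((p ^ m) ^ n) = 1 := by
    rw [← hdegf]; exact hf.coeff_natDegree
  have ha : (-1) ^ n * DeltaMinor p m n n = a := by
    have hl := hcoeff (Fin.last n)
    rw [hD, hh, Polynomial.coeff_mul_C] at hl
    simp only [Fin.val_last] at hl
    rw [hfn, one_mul] at hl
    exact hl.symm
  intro i hi
  have hj := hcoeff ⟨i, Nat.lt_succ_of_le hi⟩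
  rw [hD, hh, Polynomial.coeff_mul_C] at hj
  simp only [Fin.val_mk] at hj
  have h1 : ((-1 : MvPolynomial (Fin n) (GaloisField p m)) ^ i) * (-1) ^ i = 1 := by
    rw [← pow_add]
    exact Even.neg_one_pow ⟨i, rfl⟩
  have key : DeltaMinor p m n i = DeltaMinor p m n n * dicksonC p m n i := by
    rw [dicksonC]
    calc DeltaMinor p m n i = ((-1) ^ i * (-1) ^ i) * DeltaMinor p m n i := by rw [h1, one_mul]
      _ = (-1) ^ i * ((dicksonF p m n).coeff ((p ^ m) ^ i) * a) := by rw [mul_assoc, ← hj]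
      _ = (-1) ^ i * ((dicksonF p m n).coeff ((p ^ m) ^ i) * ((-1) ^ n * DeltaMinor p m n n)) := by
          rw [ha]
      _ = DeltaMinor p m n n * ((-1) ^ (n + i) * (dicksonF p m n).coeff ((p ^ m) ^ i)) := by
          rw [pow_add]; ring
  exact ⟨key, ⟨_, key⟩⟩
end

section
/- For every g ∈ GL_n(F_q) and every 0 ≤ i ≤ n, the linear substitution action of g on R = F_q[x_1,…,x_n] fixes the Dickson invariant C_{n,i}; that is, each C_{n,i} is a GL_n(F_q)-invariant polynomial. -/
theorem dicksonF_map (p m n : ℕ) [Fact p.Prime] [Fintype (GaloisField p m)]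
    (g : GL (Fin n) (GaloisField p m)) :
    (dicksonF p m n).map
      ((MvPolynomial.aeval
        (fun i : Fin n =>
          ∑ j : Fin n,
            MvPolynomial.C ((g : Matrix (Fin n) (Fin n) (GaloisField p m)) j i) *
              MvPolynomial.X j) : MvPolynomial (Fin n) (GaloisField p m) →ₐ[GaloisField p m]
                MvPolynomial (Fin n) (GaloisField p m)).toRingHom) = dicksonF p m n := by
  set φ := (MvPolynomial.aeval
        (fun i : Fin n =>
          ∑ j : Fin n,
            MvPolynomial.C ((g : Matrix (Fin n) (Fin n) (GaloisField p m)) j i) *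
              MvPolynomial.X j) : MvPolynomial (Fin n) (GaloisField p m) →ₐ[GaloisField p m] MvPolynomial (Fin n) (GaloisField p m))
  have hL : ∀ k : Fin n → GaloisField p m,
      φ (∑ i, MvPolynomial.C (k i) * MvPolynomial.X i) =
        ∑ j, MvPolynomial.C ((g : Matrix (Fin n) (Fin n) (GaloisField p m)).mulVec k j) * MvPolynomial.X j := by
    intro k
    simp only [map_sum, map_mul, MvPolynomial.aeval_C, MvPolynomial.aeval_X,
      MvPolynomial.algebraMap_eq, φ, Matrix.mulVec, dotProduct, map_sum,
      Finset.mul_sum, Finset.sum_mul]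
    rw [Finset.sum_comm]
    refine Finset.sum_congr rfl fun j _ => Finset.sum_congr rfl fun i _ => ?_
    ring
  have h1 : ((g⁻¹ : GL (Fin n) (GaloisField p m)) : Matrix (Fin n) (Fin n) (GaloisField p m)) *
      (g : Matrix (Fin n) (Fin n) (GaloisField p m)) = 1 := by
    rw [← Units.val_mul, inv_mul_cancel, Units.val_one]
  have h2 : ((g : GL (Fin n) (GaloisField p m)) : Matrix (Fin n) (Fin n) (GaloisField p m)) *
      ((g⁻¹ : GL (Fin n) (GaloisField p m)) : Matrix (Fin n) (Fin n) (GaloisField p m)) = 1 := by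
    rw [← Units.val_mul, mul_inv_cancel, Units.val_one]
  have hbij : Function.Bijective
      (fun k : Fin n → GaloisField p m => (g : Matrix (Fin n) (Fin n) (GaloisField p m)).mulVec k) := by
    constructor
    · intro a b hab
      have h := congrArg (fun v => ((g⁻¹ : GL (Fin n) (GaloisField p m)) :
        Matrix (Fin n) (Fin n) (GaloisField p m)).mulVec v) hab
      simpa only [Matrix.mulVec_mulVec, h1, Matrix.one_mulVec] using h
    · intro b
      refine ⟨((g⁻¹ : GL (Fin n) (GaloisField p m)) :
        Matrix (Fin n) (Fin n) (GaloisField p m)).mulVec b, ?_⟩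
      simp only [Matrix.mulVec_mulVec, h2, Matrix.one_mulVec]
  unfold dicksonF
  rw [Polynomial.map_prod]
  simp only [Polynomial.map_sub, Polynomial.map_X, Polynomial.map_C]
  have hC : ∀ k : Fin n → GaloisField p m,
      φ.toRingHom (∑ i, MvPolynomial.C (k i) * MvPolynomial.X i) =
        ∑ j, MvPolynomial.C ((g : Matrix (Fin n) (Fin n) (GaloisField p m)).mulVec k j) * MvPolynomial.X j :=
    hL
  simp only [hC]
  exact Fintype.prod_bijective _ hbij
    (fun k => Polynomial.X - Polynomial.C (∑ j, MvPolynomial.C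
      ((g : Matrix (Fin n) (Fin n) (GaloisField p m)).mulVec k j) * MvPolynomial.X j))
    (fun k => Polynomial.X - Polynomial.C (∑ i, MvPolynomial.C (k i) * MvPolynomial.X i))
    fun k => rfl

/-- for every `g ∈ GL_n(F_q)` and every `0 ≤ i ≤ n`, the linear
substitution action of `g` (sending `x_i ↦ Σ_j g_{ji} x_j`) fixes the Dickson
invariant `C_{n,i}`. -/
theorem dicksonC_invariant (p m n : ℕ) [Fact p.Prime]
    [Fintype (GaloisField p m)] (hm : 1 ≤ m) (hn : 1 ≤ n) :
    ∀ g : GL (Fin n) (GaloisField p m), ∀ i ≤ n,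
      MvPolynomial.aeval
        (fun i : Fin n =>
          ∑ j : Fin n,
            MvPolynomial.C ((g : Matrix (Fin n) (Fin n) (GaloisField p m)) j i) *
              MvPolynomial.X j) (dicksonC p m n i) = dicksonC p m n i := by
  intro g i _
  unfold dicksonC
  rw [map_mul, map_pow, map_neg, map_one]
  congr 1
  have h := congrArg (fun q => Polynomial.coeff q ((p ^ m) ^ i)) (dicksonF_map p m n g)
  simpa [Polynomial.coeff_map] using h
end

section
/- In the polynomial ring F_p[ξ_1,η_1,…,ξ_l,η_l], the 2l polynomials r_i := Σ_{j=1}^{l} (ξ_j^{p^i} η_j − ξ_j η_j^{p^i}), for 1 ≤ i ≤ 2l, are algebraically independent over F_p. -/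
open MvPolynomial

section Aux

lemma pderiv_aeval_eq' {R ι σ : Type*} [CommRing R] [Fintype ι] [DecidableEq ι] [DecidableEq σ]
    (r : ι → MvPolynomial σ R) (P : MvPolynomial ι R) (v : σ) :
    pderiv v (aeval r P) = ∑ i, aeval r (pderiv i P) * pderiv v (r i) := by
  induction P using MvPolynomial.induction_on with
  | C a => simp
  | add f g hf hg =>
      simp only [map_add, hf, hg, add_mul, Finset.sum_add_distrib]
  | mul_X f n hf =>
      have key : ∀ i : ι, aeval r (pderiv i (f * X n)) * pderiv v (r i)
          = aeval r (pderiv i f) * pderiv v (r i) * r n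
            + (if i = n then aeval r f * pderiv v (r i) else 0) := by
        intro i
        rcases eq_or_ne i n with h | h
        · subst h; simp [pderiv_mul, pderiv_X_self]; ring
        · simp [pderiv_mul, pderiv_X_of_ne (Ne.symm h), h]; ring
      rw [Finset.sum_congr rfl fun i _ => key i, Finset.sum_add_distrib, ← Finset.sum_mul,
        ← hf, Finset.sum_ite_eq' Finset.univ n (fun i => aeval r f * pderiv v (r i))]
      simp only [map_mul, aeval_X, pderiv_mul, Finset.mem_univ, if_true]

lemma coeff_pderiv' {R σ : Type*} [CommRing R] [DecidableEq σ] (i : σ) (m : σ →₀ ℕ)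
    (P : MvPolynomial σ R) :
    coeff m (pderiv i P) = (m i + 1 : ℕ) * coeff (m + Finsupp.single i 1) P := by
  induction P using MvPolynomial.induction_on' with
  | add f g hf hg => simp [hf, hg, mul_add]
  | monomial s a =>
      rw [pderiv_monomial, coeff_monomial, coeff_monomial]
      rcases eq_or_ne s (m + Finsupp.single i 1) with h | h
      · subst h
        have h1 : m + Finsupp.single i 1 - Finsupp.single i 1 = m :=
          add_tsub_cancel_right _ _
        have h2 : ((m + Finsupp.single i 1 : σ →₀ ℕ)) i = m i + 1 := by simp
        rw [if_pos h1, if_pos rfl, h2]; push_cast; ring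
      · rw [if_neg h]
        rcases eq_or_ne (s i) 0 with h0 | h0
        · simp [h0]
        · have hle : Finsupp.single i 1 ≤ s := by
            rw [Finsupp.single_le_iff]; omega
          have : s - Finsupp.single i 1 ≠ m := by
            intro he
            exact h (by rw [← he, tsub_add_cancel_of_le hle])
          rw [if_neg this, mul_zero]

lemma frob_descent {p : ℕ} [Fact p.Prime] {σ : Type*} [DecidableEq σ]
    (P : MvPolynomial σ (ZMod p)) (hd : ∀ i, pderiv i P = 0) :
    ∃ Q : MvPolynomial σ (ZMod p), Q ^ p = P ∧
      (P.totalDegree ≠ 0 → Q.totalDegree < P.totalDegree) := by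
  have hp := (Fact.out : p.Prime)
  have hdvd : ∀ d ∈ P.support, ∀ u : σ, p ∣ d u := by
    intro d hd' u
    rcases eq_or_ne (d u) 0 with h0 | h0
    · simp [h0]
    · have hle : Finsupp.single u 1 ≤ d := by rw [Finsupp.single_le_iff]; omega
      have h1 := coeff_pderiv' u (d - Finsupp.single u 1) P
      rw [hd u, tsub_add_cancel_of_le hle] at h1
      have h2 : ((d - Finsupp.single u 1 : σ →₀ ℕ)) u + 1 = d u := by
        simp [Finsupp.tsub_apply]; omega
      rw [h2] at h1
      have h3 : coeff d P ≠ 0 := by rwa [MvPolynomial.mem_support_iff] at hd'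
      have : ((d u : ℕ) : ZMod p) = 0 := by
        rcases mul_eq_zero.mp h1.symm with h | h
        · exact h
        · exact absurd h h3
      exact (ZMod.natCast_eq_zero_iff _ _).mp this
  classical
  set Q : MvPolynomial σ (ZMod p) :=
    ∑ d ∈ P.support, monomial (Finsupp.mapRange (· / p) (Nat.zero_div p) d) (coeff d P) with hQ
  have hpow : Q ^ p = P := by
    rw [hQ, sum_pow_char]
    calc ∑ d ∈ P.support, (monomial (Finsupp.mapRange (· / p) (Nat.zero_div p) d) (coeff d P)) ^ p
        = ∑ d ∈ P.support, monomial d (coeff d P) := by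
          refine Finset.sum_congr rfl fun d hd' => ?_
          have hsm : p • Finsupp.mapRange (· / p) (Nat.zero_div p) d = d := by
            ext u
            rw [Finsupp.smul_apply, Finsupp.mapRange_apply, smul_eq_mul]
            exact Nat.mul_div_cancel' (hdvd d hd' u)
          rw [monomial_pow, ZMod.pow_card, hsm]
      _ = P := support_sum_monomial_coeff P
  refine ⟨Q, hpow, fun htd => ?_⟩
  have hlt : ∀ d ∈ P.support,
      (monomial (Finsupp.mapRange (· / p) (Nat.zero_div p) d) (coeff d P)).totalDegree
        < P.totalDegree := by
    intro d hd'
    refine (totalDegree_monomial_le _ _).trans_lt ?_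
    show ((Finsupp.mapRange (· / p) (Nat.zero_div p) d).sum fun _ e => e) < P.totalDegree
    have hsum : (Finsupp.mapRange (· / p) (Nat.zero_div p) d).sum (fun _ e => e)
        = d.sum fun _ e => e / p := Finsupp.sum_mapRange_index (fun _ => rfl)
    have hmul : (d.sum fun _ e => e / p) * p = d.sum fun _ e => e := by
      rw [Finsupp.sum, Finsupp.sum, Finset.sum_mul]
      exact Finset.sum_congr rfl fun u _ => Nat.div_mul_cancel (hdvd d hd' u)
    have hle : d.sum (fun _ e => e) ≤ P.totalDegree :=
      Finset.le_sup (f := fun d => d.sum fun _ e => e) hd'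
    rw [hsum]
    rcases Nat.eq_zero_or_pos (d.sum fun _ e => e / p) with h0 | h0
    · omega
    · have : (d.sum fun _ e => e / p) < (d.sum fun _ e => e / p) * p := by
        have := hp.two_le; nlinarith
      omega
  rcases Finset.eq_empty_or_nonempty P.support with he | hne
  · exact absurd (by simp [totalDegree, he]) htd
  · refine (totalDegree_finset_sum _ _).trans_lt ?_
    rw [Finset.sup_lt_iff (show ⊥ < P.totalDegree by simpa [bot_eq_zero] using Nat.pos_of_ne_zero htd)]
    exact hlt

lemma moore_vanish {p : ℕ} [Fact p.Prime] {σ : Type*} [Fintype σ] [DecidableEq σ] {n : ℕ}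
    (hn : n ≤ Fintype.card σ) (c : Fin n → MvPolynomial σ (ZMod p))
    (h : ∀ u : σ, ∑ i : Fin n, c i * (X u : MvPolynomial σ (ZMod p)) ^ p ^ ((i : ℕ) + 1) = 0)
    (i : Fin n) : c i = 0 := by
  classical
  have hp := (Fact.out : p.Prime)
  set G : Polynomial (MvPolynomial σ (ZMod p)) :=
    ∑ i : Fin n, Polynomial.C (c i) * Polynomial.X ^ p ^ (i : ℕ) with hG
  set y : (σ → ZMod p) → MvPolynomial σ (ZMod p) :=
    fun a => ∑ u : σ, (C (a u) : MvPolynomial σ (ZMod p)) * (X u) ^ p with hy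
  have hyinj : Function.Injective y := by
    intro a b hab
    funext u
    have ha : ∀ a : σ → ZMod p, coeff (Finsupp.single u p) (y a) = a u := by
      intro a
      rw [hy]
      simp only [C_mul_X_pow_eq_monomial]
      rw [MvPolynomial.coeff_sum]
      rw [Finset.sum_eq_single u (fun v _ hv => ?_) (by simp)]
      · rw [coeff_monomial, if_pos rfl]
      · rw [coeff_monomial, if_neg]
        exact fun he => hv ((Finsupp.single_left_inj hp.ne_zero).mp he)
    rw [← ha a, ← ha b, hab]
  have heval : ∀ a : σ → ZMod p, G.eval (y a) = 0 := by
    intro a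
    rw [hG, Polynomial.eval_finset_sum]
    have hterm : ∀ i : Fin n, (Polynomial.C (c i) * Polynomial.X ^ p ^ (i : ℕ)).eval (y a)
        = ∑ u : σ, (C (a u) : MvPolynomial σ (ZMod p)) * (c i * (X u) ^ p ^ ((i : ℕ) + 1)) := by
      intro i
      rw [Polynomial.eval_mul, Polynomial.eval_C, Polynomial.eval_pow, Polynomial.eval_X, hy]
      rw [sum_pow_char_pow]
      rw [Finset.mul_sum]
      refine Finset.sum_congr rfl fun u _ => ?_
      rw [mul_pow, ← map_pow, ZMod.pow_card_pow, ← pow_mul, ← pow_succ']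
      ring
    rw [Finset.sum_congr rfl fun i _ => hterm i, Finset.sum_comm]
    simp only [← Finset.mul_sum, h, mul_zero, Finset.sum_const_zero]
  have hdeg : G.natDegree < Fintype.card (σ → ZMod p) := by
    have h1 : G.natDegree ≤ p ^ (n - 1) := by
      rw [hG]
      refine Polynomial.natDegree_sum_le_of_forall_le _ _ fun j _ => ?_
      refine (Polynomial.natDegree_C_mul_le _ _).trans ?_
      rw [Polynomial.natDegree_X_pow]
      exact Nat.pow_le_pow_right hp.one_le (by omega)
    have h2 : Fintype.card (σ → ZMod p) = p ^ Fintype.card σ := by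
      rw [Fintype.card_fun, ZMod.card]
    have h3 : p ^ (n - 1) < p ^ Fintype.card σ :=
      Nat.pow_lt_pow_right hp.one_lt (by have := i.2; omega)
    omega
  have hG0 : G = 0 :=
    Polynomial.eq_zero_of_natDegree_lt_card_of_eval_eq_zero G hyinj heval hdeg
  have hc := congrArg (Polynomial.coeff · (p ^ (i : ℕ))) hG0
  simp only [hG, Polynomial.finset_sum_coeff, Polynomial.coeff_C_mul, Polynomial.coeff_X_pow,
    Polynomial.coeff_zero] at hc
  rw [Finset.sum_eq_single i (fun j _ hj => ?_) (by simp)] at hc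
  · simpa using hc
  · have hne : p ^ (i : ℕ) ≠ p ^ (j : ℕ) := fun he =>
      hj (Fin.ext (Nat.pow_right_injective hp.two_le he)).symm
    simp [hne]

lemma totalDegree_pderiv_le {R σ : Type*} [CommRing R] [DecidableEq σ] (i : σ)
    (P : MvPolynomial σ R) (N : ℕ) (hP : P.totalDegree ≤ N + 1) :
    (pderiv i P).totalDegree ≤ N := by
  refine Finset.sup_le fun m hm => ?_
  rw [MvPolynomial.mem_support_iff, coeff_pderiv' i m P] at hm
  have h1 : coeff (m + Finsupp.single i 1) P ≠ 0 := fun h => hm (by rw [h, mul_zero])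
  have h2 : (m + Finsupp.single i 1).sum (fun _ e => e) ≤ N + 1 :=
    le_trans (Finset.le_sup (f := fun d : (σ →₀ ℕ) => d.sum fun _ e => e)
      (MvPolynomial.mem_support_iff.mpr h1)) hP
  have h3 : (m + Finsupp.single i 1).sum (fun _ e => e)
      = m.sum (fun _ e => e) + 1 := by
    rw [Finsupp.sum_add_index' (fun _ => rfl) (fun _ _ _ => rfl), Finsupp.sum_single_index rfl]
  omega

lemma pderiv_r {p l : ℕ} [Fact p.Prime] (i : Fin (2 * l)) (j : Fin l) (b : Fin 2) :
    pderiv (j, b) (∑ j' : Fin l,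
        ((X (j', 0)) ^ p ^ ((i : ℕ) + 1) * X (j', 1) -
          X (j', 0) * (X (j', 1)) ^ p ^ ((i : ℕ) + 1) :
          MvPolynomial (Fin l × Fin 2) (ZMod p)))
      = (if b = 1 then (X (j, 0)) ^ p ^ ((i : ℕ) + 1)
          else - (X (j, 1)) ^ p ^ ((i : ℕ) + 1)) := by
  classical
  have hzero : ((p ^ ((i : ℕ) + 1) : ℕ) : MvPolynomial (Fin l × Fin 2) (ZMod p)) = 0 := by
    rw [Nat.cast_pow, CharP.cast_eq_zero (MvPolynomial (Fin l × Fin 2) (ZMod p)) p,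
      zero_pow (Nat.succ_ne_zero _)]
  rw [map_sum, Finset.sum_eq_single j (fun j' _ hj' => ?_) (by simp)]
  · simp only [map_sub, pderiv_mul, pderiv_pow, pderiv_X, hzero, zero_mul, mul_zero, Pi.single_apply,
      Prod.mk.injEq, and_true, true_and]
    fin_cases b <;> simp
  · simp [pderiv_mul, pderiv_pow, pderiv_X, hzero, Pi.single_apply, hj']

end Aux

/-- in the polynomial ring `F_p[ξ_1,η_1,…,ξ_l,η_l]` (variables indexed
by `Fin l × Fin 2`, with `X (j,0) = ξ_j` and `X (j,1) = η_j`), the `2l` polynomials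
`r_i = Σ_{j=1}^{l} (ξ_j^{p^i} η_j − ξ_j η_j^{p^i})`, `1 ≤ i ≤ 2l`, are algebraically
independent over `F_p`. -/
theorem r_algebraicIndependent (p l : ℕ) [Fact p.Prime] (hodd : Odd p) (hl : 1 ≤ l) :
    AlgebraicIndependent (ZMod p)
      (fun i : Fin (2 * l) =>
        ∑ j : Fin l,
          ((MvPolynomial.X (j, 0)) ^ p ^ ((i : ℕ) + 1) * MvPolynomial.X (j, 1) -
              MvPolynomial.X (j, 0) * (MvPolynomial.X (j, 1)) ^ p ^ ((i : ℕ) + 1) :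
            MvPolynomial (Fin l × Fin 2) (ZMod p))) := by
  classical
  have hp := (Fact.out : p.Prime)
  set r : Fin (2 * l) → MvPolynomial (Fin l × Fin 2) (ZMod p) :=
    fun i : Fin (2 * l) =>
      ∑ j : Fin l,
        ((MvPolynomial.X (j, 0)) ^ p ^ ((i : ℕ) + 1) * MvPolynomial.X (j, 1) -
            MvPolynomial.X (j, 0) * (MvPolynomial.X (j, 1)) ^ p ^ ((i : ℕ) + 1) :
          MvPolynomial (Fin l × Fin 2) (ZMod p)) with hr
  rw [algebraicIndependent_iff]
  suffices H : ∀ (N : ℕ) (P : MvPolynomial (Fin (2 * l)) (ZMod p)),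
      P.totalDegree ≤ N → aeval r P = 0 → P = 0 by
    intro P hP
    exact H P.totalDegree P le_rfl hP
  intro N
  induction N with
  | zero =>
      intro P hP0 hP
      have h0 := (totalDegree_eq_zero_iff _ P).mp (Nat.le_zero.mp hP0)
      have hC : P = C (coeff 0 P) := by
        ext m
        rcases eq_or_ne m 0 with rfl | hm
        · simp
        · rw [coeff_C, if_neg (Ne.symm hm)]
          by_contra hc
          have hmem : m ∈ P.support := MvPolynomial.mem_support_iff.mpr hc
          exact hm (Finsupp.ext fun u => h0 m hmem u)
      rw [hC] at hP ⊢
      rw [aeval_C, MvPolynomial.algebraMap_eq] at hP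
      rw [MvPolynomial.C_injective _ _ (hP.trans (MvPolynomial.C_0).symm), map_zero]
  | succ N IH =>
      intro P hP0 hP
      rcases le_or_gt P.totalDegree N with hle | hlt
      · exact IH P hle hP
      have htd : P.totalDegree = N + 1 := le_antisymm hP0 hlt
      set c : Fin (2 * l) → MvPolynomial (Fin l × Fin 2) (ZMod p) :=
        fun i => aeval r (pderiv i P) with hc
      have hchain : ∀ v : Fin l × Fin 2, ∑ i, c i * pderiv v (r i) = 0 := by
        intro v
        rw [← pderiv_aeval_eq' r P v, hP, map_zero]
      have hu : ∀ u : Fin l × Fin 2,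
          ∑ i : Fin (2 * l), c i * (X u : MvPolynomial (Fin l × Fin 2) (ZMod p))
            ^ p ^ ((i : ℕ) + 1) = 0 := by
        rintro ⟨j, k⟩
        have case1 : ∑ i : Fin (2 * l), c i * (X (j, (0 : Fin 2)) :
            MvPolynomial (Fin l × Fin 2) (ZMod p)) ^ p ^ ((i : ℕ) + 1) = 0 := by
          have h1 := hchain (j, 1)
          simp only [hr] at h1
          simp only [pderiv_r] at h1
          simp only [reduceIte] at h1
          exact h1
        have case2 : ∑ i : Fin (2 * l), c i * (X (j, (1 : Fin 2)) :
            MvPolynomial (Fin l × Fin 2) (ZMod p)) ^ p ^ ((i : ℕ) + 1) = 0 := by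
          have h1 := hchain (j, 0)
          simp only [hr] at h1
          simp only [pderiv_r] at h1
          simp only [if_neg (show ¬(0:Fin 2) = 1 by decide)] at h1
          have h2 : ∑ i : Fin (2 * l), c i *
              (X (j, (1 : Fin 2)) : MvPolynomial (Fin l × Fin 2) (ZMod p)) ^ p ^ ((i : ℕ) + 1)
              = -∑ i : Fin (2 * l), c i * -(X (j, (1 : Fin 2)) :
                MvPolynomial (Fin l × Fin 2) (ZMod p)) ^ p ^ ((i : ℕ) + 1) := by
            rw [← Finset.sum_neg_distrib]
            exact Finset.sum_congr rfl fun i _ => by ring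
          rw [h2, h1, neg_zero]
        fin_cases k
        · exact case1
        · exact case2
      have hcard : 2 * l ≤ Fintype.card (Fin l × Fin 2) := by
        simp [Fintype.card_prod, mul_comm]
      have hczero : ∀ i, c i = 0 := fun i => moore_vanish hcard c hu i
      have hpdzero : ∀ i, pderiv i P = 0 := by
        intro i
        refine IH (pderiv i P) (totalDegree_pderiv_le i P N hP0) (hczero i)
      obtain ⟨Q, hQP, hQd⟩ := frob_descent P hpdzero
      have hQ0 : aeval r Q = 0 := by
        have : (aeval r Q) ^ p = 0 := by rw [← map_pow, hQP, hP]
        exact pow_eq_zero_iff hp.ne_zero |>.mp this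
      have : Q = 0 := IH Q (by have := hQd (by omega); omega) hQ0
      rw [← hQP, this, zero_pow hp.ne_zero]
end

section
/- For every 0 ≤ j ≤ 4, one has the identity R_j(r_1, r_2, r_3, r_4) = Δ_{4,j}(η_1, ξ_1, η_2, ξ_2) in the polynomial ring F_p[η_1, ξ_1, η_2, ξ_2]. -/
open MvPolynomial

/-- The polynomials `R_0, …, R_4 ∈ F_p[Y_1,Y_2,Y_3,Y_4]` (with `Y_i = X (i-1)`). -/
noncomputable def Rpoly (p : ℕ) : ℕ → MvPolynomial (Fin 4) (ZMod p)
  | 0 => X 0 ^ (p ^ 3 + p) - X 1 ^ (p ^ 2 + p) + X 0 ^ p ^ 2 * X 2 ^ p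
  | 1 => X 0 ^ p ^ 3 * X 1 - X 1 ^ p ^ 2 * X 2 + X 0 ^ p ^ 2 * X 3
  | 2 => X 0 ^ (p ^ 3 + 1) - X 2 ^ (p + 1) + X 1 ^ p * X 3
  | 3 => X 0 * X 1 ^ p ^ 2 - X 1 * X 2 ^ p + X 0 ^ p * X 3
  | _ => X 0 ^ (p ^ 2 + 1) - X 1 ^ (p + 1) + X 0 ^ p * X 2

/-- In `F_p[η_1, ξ_1, η_2, ξ_2]` (variables `X 0 = η_1`, `X 1 = ξ_1`, `X 2 = η_2`,
`X 3 = ξ_2`), the element `r_i = ξ_1^{p^i} η_1 − ξ_1 η_1^{p^i} + ξ_2^{p^i} η_2 − ξ_2 η_2^{p^i}`. -/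
noncomputable def rElt (p i : ℕ) : MvPolynomial (Fin 4) (ZMod p) :=
  X 1 ^ p ^ i * X 0 - X 1 * X 0 ^ p ^ i + X 3 ^ p ^ i * X 2 - X 3 * X 2 ^ p ^ i

/-- `Δ_{4,j}(η_1, ξ_1, η_2, ξ_2)`: the determinant of the `4×4` matrix whose columns
correspond to the variables `(η_1, ξ_1, η_2, ξ_2)` (i.e. `X c`), whose rows are
indexed by `r ∈ {0,…,4} \ {j}` (in increasing order), with entry `z^{p^r}` in the
column of the variable `z`. -/
noncomputable def Delta4 (p : ℕ) (j : ℕ) : MvPolynomial (Fin 4) (ZMod p) :=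
  Matrix.det (Matrix.of fun r c : Fin 4 =>
    (X c : MvPolynomial (Fin 4) (ZMod p)) ^
      p ^ (if (r : ℕ) < j then (r : ℕ) else (r : ℕ) + 1))

lemma det_fin_four' {R : Type*} [CommRing R] (A : Matrix (Fin 4) (Fin 4) R) :
    A.det =
      A 0 0 * (A 1 1 * (A 2 2 * A 3 3 - A 2 3 * A 3 2)
        - A 1 2 * (A 2 1 * A 3 3 - A 2 3 * A 3 1)
        + A 1 3 * (A 2 1 * A 3 2 - A 2 2 * A 3 1))
      - A 0 1 * (A 1 0 * (A 2 2 * A 3 3 - A 2 3 * A 3 2)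
        - A 1 2 * (A 2 0 * A 3 3 - A 2 3 * A 3 0)
        + A 1 3 * (A 2 0 * A 3 2 - A 2 2 * A 3 0))
      + A 0 2 * (A 1 0 * (A 2 1 * A 3 3 - A 2 3 * A 3 1)
        - A 1 1 * (A 2 0 * A 3 3 - A 2 3 * A 3 0)
        + A 1 3 * (A 2 0 * A 3 1 - A 2 1 * A 3 0))
      - A 0 3 * (A 1 0 * (A 2 1 * A 3 2 - A 2 2 * A 3 1)
        - A 1 1 * (A 2 0 * A 3 2 - A 2 2 * A 3 0)
        + A 1 2 * (A 2 0 * A 3 1 - A 2 1 * A 3 0)) := by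
  rw [Matrix.det_succ_row_zero]
  simp only [Fin.sum_univ_succ, Fin.sum_univ_zero, Matrix.det_fin_three,
    Matrix.submatrix_apply]
  simp [Fin.succAbove, Fin.lt_def]
  ring

lemma hfrob (p : ℕ) [Fact p.Prime] (i k : ℕ) :
    rElt p i ^ p ^ k =
      ((X 1 : MvPolynomial (Fin 4) (ZMod p)) ^ p ^ i) ^ p ^ k * X 0 ^ p ^ k
        - X 1 ^ p ^ k * (X 0 ^ p ^ i) ^ p ^ k
        + (X 3 ^ p ^ i) ^ p ^ k * X 2 ^ p ^ k
        - X 3 ^ p ^ k * (X 2 ^ p ^ i) ^ p ^ k := by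
  simp [rElt, sub_pow_char_pow, add_pow_char_pow, mul_pow]

lemma hfrob1 (p : ℕ) [Fact p.Prime] (i : ℕ) :
    rElt p i ^ p =
      ((X 1 : MvPolynomial (Fin 4) (ZMod p)) ^ p ^ i) ^ p * X 0 ^ p
        - X 1 ^ p * (X 0 ^ p ^ i) ^ p
        + (X 3 ^ p ^ i) ^ p * X 2 ^ p
        - X 3 ^ p * (X 2 ^ p ^ i) ^ p := by
  simpa using hfrob p i 1

/-- for every `0 ≤ j ≤ 4`,
`R_j(r_1, r_2, r_3, r_4) = Δ_{4,j}(η_1, ξ_1, η_2, ξ_2)` in `F_p[η_1, ξ_1, η_2, ξ_2]`. -/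
theorem Rpoly_eval_eq_Delta4 (p : ℕ) [Fact p.Prime] (hodd : Odd p) :
    ∀ j ≤ 4,
      MvPolynomial.aeval (fun i : Fin 4 => rElt p ((i : ℕ) + 1)) (Rpoly p j) =
        Delta4 p j := by
  intro j hj
  interval_cases j <;>
  · rw [Delta4, det_fin_four']
    simp only [show Rpoly p 4 = X 0 ^ (p ^ 2 + 1) - X 1 ^ (p + 1) + X 0 ^ p * X 2 from rfl,
      Rpoly, map_add, map_sub, map_mul, map_pow, aeval_X, pow_add, pow_one,
      Matrix.of_apply, Fin.isValue, Fin.val_zero, Fin.val_one, Fin.val_two,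
      show ((3 : Fin 4) : ℕ) = 3 from rfl, zero_add, Nat.reduceAdd]
    norm_num [hfrob, hfrob1]
    try simp only [rElt]
    ring
end

section
/- For every 0 ≤ j ≤ 4, one has the identity R_j(r_1, r_2, r_3, r_4) = C_{4,j}(η_1, ξ_1, η_2, ξ_2) · R_4(r_1, r_2, r_3, r_4) in the polynomial ring F_p[η_1, ξ_1, η_2, ξ_2]. In particular (j = 3): r_1^p r_4 + r_1 r_2^{p²} − r_2 r_3^p = C_{4,3} · (r_1^{p²+1} − r_2^{p+1} + r_1^p r_3). -/
open MvPolynomial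

/-- `f_4(X) = ∏_{(k_1,k_2,k_3,k_4) ∈ F_p^4} (X − (k_1 η_1 + k_2 ξ_1 + k_3 η_2 + k_4 ξ_2))`. -/
noncomputable def dicksonF4 (p : ℕ) [Fact p.Prime] :
    Polynomial (MvPolynomial (Fin 4) (ZMod p)) :=
  ∏ k : Fin 4 → ZMod p,
    (Polynomial.X - Polynomial.C (∑ i, MvPolynomial.C (k i) * MvPolynomial.X i))

/-- The Dickson invariant `C_{4,j}(η_1, ξ_1, η_2, ξ_2) := (−1)^{4+j} · (coefficient of
`X^{p^j}` in `f_4(X)`)`. -/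
noncomputable def dicksonC4 (p : ℕ) [Fact p.Prime] (j : ℕ) :
    MvPolynomial (Fin 4) (ZMod p) :=
  (-1) ^ (4 + j) * (dicksonF4 p).coeff (p ^ j)

namespace Statement19Aux

/-- The twisted symplectic form `S_{i,j} = ξ_1^{p^i} η_1^{p^j} − ξ_1^{p^j} η_1^{p^i}
+ ξ_2^{p^i} η_2^{p^j} − ξ_2^{p^j} η_2^{p^i}`. -/
noncomputable def S (p i j : ℕ) : MvPolynomial (Fin 4) (ZMod p) :=
  X 1 ^ p ^ i * X 0 ^ p ^ j - X 1 ^ p ^ j * X 0 ^ p ^ i +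
  X 3 ^ p ^ i * X 2 ^ p ^ j - X 3 ^ p ^ j * X 2 ^ p ^ i

/-- `R_j` evaluated at `(r_1, r_2, r_3, r_4)`. -/
noncomputable def Q (p : ℕ) (j : ℕ) : MvPolynomial (Fin 4) (ZMod p) :=
  MvPolynomial.aeval (fun i : Fin 4 => rElt p ((i : ℕ) + 1)) (Rpoly p j)

variable (p : ℕ) [Fact p.Prime]

lemma rElt_pow (i j : ℕ) : rElt p i ^ p ^ j = S p (i + j) j := by
  rw [rElt, S, sub_pow_char_pow, add_pow_char_pow, sub_pow_char_pow,
    mul_pow, mul_pow, mul_pow, mul_pow,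
    ← pow_mul, ← pow_mul, ← pow_mul, ← pow_mul, ← pow_add]

lemma rElt_pow_one (i : ℕ) : rElt p i ^ p = S p (i + 1) 1 := by
  have h := rElt_pow p i 1; rwa [pow_one] at h

lemma rElt_eq_S (i : ℕ) : rElt p i = S p i 0 := by
  have h := rElt_pow p i 0; rwa [pow_zero, pow_one, Nat.add_zero] at h

lemma hQ0 : Q p 0 = S p 4 3 * S p 2 1 - S p 4 2 * S p 3 1 + S p 4 1 * S p 3 2 := by
  have h : Q p 0 = rElt p 1 ^ (p ^ 3 + p) - rElt p 2 ^ (p ^ 2 + p)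
      + rElt p 1 ^ p ^ 2 * rElt p 3 ^ p := by
    simp [Q, Rpoly, show ((2 : Fin 4) : ℕ) = 2 from rfl]
  rw [h, pow_add, pow_add, rElt_pow p 1 3, rElt_pow_one p 1, rElt_pow p 2 2,
    rElt_pow_one p 2, rElt_pow p 1 2, rElt_pow_one p 3]
  norm_num
  ring

lemma hQ1 : Q p 1 = S p 4 3 * S p 2 0 - S p 4 2 * S p 3 0 + S p 3 2 * S p 4 0 := by
  have h : Q p 1 = rElt p 1 ^ p ^ 3 * rElt p 2 - rElt p 2 ^ p ^ 2 * rElt p 3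
      + rElt p 1 ^ p ^ 2 * rElt p 4 := by
    simp [Q, Rpoly, show ((2 : Fin 4) : ℕ) = 2 from rfl, show ((3 : Fin 4) : ℕ) = 3 from rfl]
  rw [h, rElt_pow p 1 3, rElt_pow p 2 2, rElt_pow p 1 2,
    rElt_eq_S p 2, rElt_eq_S p 3, rElt_eq_S p 4]

lemma hQ2 : Q p 2 = S p 4 3 * S p 1 0 - S p 3 0 * S p 4 1 + S p 3 1 * S p 4 0 := by
  have h : Q p 2 = rElt p 1 ^ (p ^ 3 + 1) - rElt p 3 ^ (p + 1)
      + rElt p 2 ^ p * rElt p 4 := by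
    simp [Q, Rpoly, show ((2 : Fin 4) : ℕ) = 2 from rfl, show ((3 : Fin 4) : ℕ) = 3 from rfl]
  rw [h, pow_add, pow_add, pow_one, pow_one, rElt_pow p 1 3, rElt_pow_one p 3,
    rElt_pow_one p 2, rElt_eq_S p 1, rElt_eq_S p 3, rElt_eq_S p 4]
  norm_num
  ring

lemma hQ3 : Q p 3 = S p 1 0 * S p 4 2 - S p 2 0 * S p 4 1 + S p 4 0 * S p 2 1 := by
  have h : Q p 3 = rElt p 1 * rElt p 2 ^ p ^ 2 - rElt p 2 * rElt p 3 ^ p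
      + rElt p 1 ^ p * rElt p 4 := by
    simp [Q, Rpoly, show ((2 : Fin 4) : ℕ) = 2 from rfl, show ((3 : Fin 4) : ℕ) = 3 from rfl]
  rw [h, rElt_pow p 2 2, rElt_pow_one p 3, rElt_pow_one p 1,
    rElt_eq_S p 1, rElt_eq_S p 2, rElt_eq_S p 4]
  norm_num
  ring

lemma hQ4 : Q p 4 = S p 1 0 * S p 3 2 - S p 2 0 * S p 3 1 + S p 3 0 * S p 2 1 := by
  have h : Q p 4 = rElt p 1 ^ (p ^ 2 + 1) - rElt p 2 ^ (p + 1)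
      + rElt p 1 ^ p * rElt p 3 := by
    simp [Q, Rpoly, show ((2 : Fin 4) : ℕ) = 2 from rfl]
  rw [h, pow_add, pow_add, pow_one, pow_one, rElt_pow p 1 2, rElt_pow_one p 2,
    rElt_pow_one p 1, rElt_eq_S p 1, rElt_eq_S p 2, rElt_eq_S p 3]
  norm_num
  ring

set_option maxHeartbeats 1000000 in
lemma key0 :
    Q p 0 * X (0 : Fin 4) ^ p ^ 0 - Q p 1 * X (0 : Fin 4) ^ p ^ 1
      + Q p 2 * X (0 : Fin 4) ^ p ^ 2 - Q p 3 * X (0 : Fin 4) ^ p ^ 3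
      + Q p 4 * X (0 : Fin 4) ^ p ^ 4 = 0 := by
  rw [hQ0, hQ1, hQ2, hQ3, hQ4]
  simp only [S]
  ring

set_option maxHeartbeats 1000000 in
lemma key1 :
    Q p 0 * X (1 : Fin 4) ^ p ^ 0 - Q p 1 * X (1 : Fin 4) ^ p ^ 1
      + Q p 2 * X (1 : Fin 4) ^ p ^ 2 - Q p 3 * X (1 : Fin 4) ^ p ^ 3
      + Q p 4 * X (1 : Fin 4) ^ p ^ 4 = 0 := by
  rw [hQ0, hQ1, hQ2, hQ3, hQ4]
  simp only [S]
  ring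

set_option maxHeartbeats 1000000 in
lemma key2 :
    Q p 0 * X (2 : Fin 4) ^ p ^ 0 - Q p 1 * X (2 : Fin 4) ^ p ^ 1
      + Q p 2 * X (2 : Fin 4) ^ p ^ 2 - Q p 3 * X (2 : Fin 4) ^ p ^ 3
      + Q p 4 * X (2 : Fin 4) ^ p ^ 4 = 0 := by
  rw [hQ0, hQ1, hQ2, hQ3, hQ4]
  simp only [S]
  ring

set_option maxHeartbeats 1000000 in
lemma key3 :
    Q p 0 * X (3 : Fin 4) ^ p ^ 0 - Q p 1 * X (3 : Fin 4) ^ p ^ 1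
      + Q p 2 * X (3 : Fin 4) ^ p ^ 2 - Q p 3 * X (3 : Fin 4) ^ p ^ 3
      + Q p 4 * X (3 : Fin 4) ^ p ^ 4 = 0 := by
  rw [hQ0, hQ1, hQ2, hQ3, hQ4]
  simp only [S]
  ring

/-- The cofactor-expansion identity: the alternating sum
`Q_0 u − Q_1 u^p + Q_2 u^{p²} − Q_3 u^{p³} + Q_4 u^{p⁴}` vanishes for every variable `u`. -/
lemma key (u : Fin 4) :
    Q p 0 * X u ^ p ^ 0 - Q p 1 * X u ^ p ^ 1 + Q p 2 * X u ^ p ^ 2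
      - Q p 3 * X u ^ p ^ 3 + Q p 4 * X u ^ p ^ 4 = 0 := by
  fin_cases u
  · exact key0 p
  · exact key1 p
  · exact key2 p
  · exact key3 p

/-- The polynomial `g(T) = Q_0 T − Q_1 T^p + Q_2 T^{p²} − Q_3 T^{p³} + Q_4 T^{p⁴}`. -/
noncomputable def gP : Polynomial (MvPolynomial (Fin 4) (ZMod p)) :=
  Polynomial.C (Q p 0) * Polynomial.X ^ p ^ 0 - Polynomial.C (Q p 1) * Polynomial.X ^ p ^ 1
  + Polynomial.C (Q p 2) * Polynomial.X ^ p ^ 2 - Polynomial.C (Q p 3) * Polynomial.X ^ p ^ 3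
  + Polynomial.C (Q p 4) * Polynomial.X ^ p ^ 4

lemma v_pow (k : Fin 4 → ZMod p) (j : ℕ) :
    (∑ i, MvPolynomial.C (k i) * X i : MvPolynomial (Fin 4) (ZMod p)) ^ p ^ j
      = ∑ i, MvPolynomial.C (k i) * (X i : MvPolynomial (Fin 4) (ZMod p)) ^ p ^ j := by
  rw [Fin.sum_univ_four, Fin.sum_univ_four, add_pow_char_pow, add_pow_char_pow,
    add_pow_char_pow, mul_pow, mul_pow, mul_pow, mul_pow,
    ← map_pow, ← map_pow, ← map_pow, ← map_pow,
    ZMod.pow_card_pow, ZMod.pow_card_pow, ZMod.pow_card_pow, ZMod.pow_card_pow]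

lemma g_eval (k : Fin 4 → ZMod p) :
    (gP p).eval (∑ i, MvPolynomial.C (k i) * X i) = 0 := by
  have hv := v_pow p k
  simp only [gP, Polynomial.eval_add, Polynomial.eval_sub, Polynomial.eval_mul,
    Polynomial.eval_pow, Polynomial.eval_C, Polynomial.eval_X]
  rw [hv 0, hv 1, hv 2, hv 3, hv 4, Finset.mul_sum, Finset.mul_sum, Finset.mul_sum,
    Finset.mul_sum, Finset.mul_sum, ← Finset.sum_sub_distrib, ← Finset.sum_add_distrib,
    ← Finset.sum_sub_distrib, ← Finset.sum_add_distrib]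
  refine Finset.sum_eq_zero fun i _ => ?_
  linear_combination (MvPolynomial.C (k i) : MvPolynomial (Fin 4) (ZMod p)) * key p i

lemma f4_monic : (dicksonF4 p).Monic :=
  Polynomial.monic_prod_of_monic _ _ fun _ _ => Polynomial.monic_X_sub_C _

lemma card_eq : Fintype.card (Fin 4 → ZMod p) = p ^ 4 := by
  haveI : NeZero p := ⟨(Fact.out : p.Prime).ne_zero⟩
  rw [Fintype.card_fun, ZMod.card, Fintype.card_fin]

lemma f4_natDegree : (dicksonF4 p).natDegree = p ^ 4 := by
  rw [dicksonF4, Polynomial.natDegree_prod_of_monic _ _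
    fun _ _ => Polynomial.monic_X_sub_C _]
  simp only [Polynomial.natDegree_X_sub_C]
  rw [Finset.sum_const, smul_eq_mul, mul_one, Finset.card_univ, card_eq p]

lemma f4_eval (k : Fin 4 → ZMod p) :
    (dicksonF4 p).eval (∑ i, MvPolynomial.C (k i) * X i) = 0 := by
  rw [dicksonF4, Polynomial.eval_prod]
  refine Finset.prod_eq_zero (Finset.mem_univ k) ?_
  rw [Polynomial.eval_sub, Polynomial.eval_X, Polynomial.eval_C, sub_self]

lemma v_inj : Function.Injective
    (fun k : Fin 4 → ZMod p =>
      (∑ i, MvPolynomial.C (k i) * X i : MvPolynomial (Fin 4) (ZMod p))) := by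
  intro k k' h
  funext i
  have h2 := congrArg (MvPolynomial.coeff (Finsupp.single i 1)) h
  simpa [MvPolynomial.coeff_sum, MvPolynomial.coeff_C_mul, MvPolynomial.coeff_X',
    Finsupp.single_left_inj, Finset.sum_ite_eq'] using h2

lemma main_eq : Polynomial.C (Q p 4) * dicksonF4 p = gP p := by
  have hp : p.Prime := Fact.out
  have hppos : 0 < p ^ 4 := pow_pos hp.pos 4
  rw [← sub_eq_zero]
  set h : Polynomial (MvPolynomial (Fin 4) (ZMod p)) :=
    Polynomial.C (Q p 4) * dicksonF4 p - gP p with hh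
  have hsplit : h = Polynomial.C (Q p 4) * (dicksonF4 p - Polynomial.X ^ p ^ 4)
      - (Polynomial.C (Q p 0) * Polynomial.X ^ p ^ 0
        - Polynomial.C (Q p 1) * Polynomial.X ^ p ^ 1
        + Polynomial.C (Q p 2) * Polynomial.X ^ p ^ 2
        - Polynomial.C (Q p 3) * Polynomial.X ^ p ^ 3) := by
    rw [hh]; simp only [gP]; ring
  apply Polynomial.eq_zero_of_natDegree_lt_card_of_eval_eq_zero h (v_inj p)
  · intro k
    simp [hh, Polynomial.eval_sub, Polynomial.eval_mul, f4_eval p k, g_eval p k]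
  · rw [card_eq p]
    have hd1 : (Polynomial.C (Q p 4) * (dicksonF4 p - Polynomial.X ^ p ^ 4)).natDegree
        < p ^ 4 := by
      apply lt_of_le_of_lt (Polynomial.natDegree_C_mul_le _ _)
      by_cases h0 : dicksonF4 p - Polynomial.X ^ p ^ 4 = 0
      · rw [h0]; simpa using hppos
      rw [Polynomial.natDegree_lt_iff_degree_lt h0]
      have hdeg : (dicksonF4 p).degree = ((p ^ 4 : ℕ) : WithBot ℕ) := by
        rw [Polynomial.degree_eq_natDegree (f4_monic p).ne_zero, f4_natDegree p]
      calc (dicksonF4 p - Polynomial.X ^ p ^ 4).degree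
          < (dicksonF4 p).degree := by
            apply Polynomial.degree_sub_lt _ (f4_monic p).ne_zero
            · rw [(f4_monic p).leadingCoeff, Polynomial.leadingCoeff_X_pow]
            · rw [hdeg, Polynomial.degree_X_pow]
        _ ≤ ((p ^ 4 : ℕ) : WithBot ℕ) := le_of_eq hdeg
    have hd2 : (Polynomial.C (Q p 0) * Polynomial.X ^ p ^ 0
        - Polynomial.C (Q p 1) * Polynomial.X ^ p ^ 1
        + Polynomial.C (Q p 2) * Polynomial.X ^ p ^ 2
        - Polynomial.C (Q p 3) * Polynomial.X ^ p ^ 3).natDegree < p ^ 4 := by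
      have hb : ∀ i : ℕ, i ≤ 3 →
          (Polynomial.C (Q p i) * Polynomial.X ^ p ^ i).natDegree ≤ p ^ 3 :=
        fun i hi => le_trans (Polynomial.natDegree_C_mul_X_pow_le _ _)
          (Nat.pow_le_pow_right hp.pos hi)
      have h34 : p ^ 3 < p ^ 4 := Nat.pow_lt_pow_right hp.one_lt (by norm_num)
      apply lt_of_le_of_lt (Polynomial.natDegree_sub_le _ _)
      apply max_lt _ (lt_of_le_of_lt (hb 3 le_rfl) h34)
      apply lt_of_le_of_lt (Polynomial.natDegree_add_le _ _)
      apply max_lt _ (lt_of_le_of_lt (hb 2 (by norm_num)) h34)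
      apply lt_of_le_of_lt (Polynomial.natDegree_sub_le _ _)
      exact max_lt (lt_of_le_of_lt (hb 0 (by norm_num)) h34)
        (lt_of_le_of_lt (hb 1 (by norm_num)) h34)
    calc h.natDegree ≤ _ := by rw [hsplit]; exact Polynomial.natDegree_sub_le _ _
      _ < p ^ 4 := max_lt hd1 hd2

lemma forall_Q : ∀ j ≤ 4, Q p j = dicksonC4 p j * Q p 4 := by
  have hp : p.Prime := Fact.out
  have hmain := main_eq p
  have hne : ∀ i j : ℕ, (p ^ i = p ^ j) ↔ i = j :=
    fun i j => ⟨fun h => Nat.pow_right_injective hp.two_le h, fun h => by rw [h]⟩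
  have hco : ∀ j : ℕ, Q p 4 * (dicksonF4 p).coeff (p ^ j) = (gP p).coeff (p ^ j) := by
    intro j; rw [← hmain, Polynomial.coeff_C_mul]
  intro j hj
  simp only [dicksonC4]
  interval_cases j
  · have h := hco 0
    simp only [gP, Polynomial.coeff_add, Polynomial.coeff_sub, Polynomial.coeff_C_mul,
      Polynomial.coeff_X_pow, hne] at h
    norm_num at h ⊢
    linear_combination -h
  · have h := hco 1
    simp only [gP, Polynomial.coeff_add, Polynomial.coeff_sub, Polynomial.coeff_C_mul,
      Polynomial.coeff_X_pow, hne] at h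
    norm_num at h ⊢
    linear_combination h
  · have h := hco 2
    simp only [gP, Polynomial.coeff_add, Polynomial.coeff_sub, Polynomial.coeff_C_mul,
      Polynomial.coeff_X_pow, hne] at h
    norm_num at h ⊢
    linear_combination -h
  · have h := hco 3
    simp only [gP, Polynomial.coeff_add, Polynomial.coeff_sub, Polynomial.coeff_C_mul,
      Polynomial.coeff_X_pow, hne] at h
    norm_num at h ⊢
    linear_combination h
  · have h := hco 4
    simp only [gP, Polynomial.coeff_add, Polynomial.coeff_sub, Polynomial.coeff_C_mul,
      Polynomial.coeff_X_pow, hne] at h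
    norm_num at h ⊢
    linear_combination -h

end Statement19Aux

/-- for every `0 ≤ j ≤ 4`,
`R_j(r_1, r_2, r_3, r_4) = C_{4,j}(η_1, ξ_1, η_2, ξ_2) · R_4(r_1, r_2, r_3, r_4)`;
in particular (`j = 3`):
`r_1^p r_4 + r_1 r_2^{p²} − r_2 r_3^p = C_{4,3} · (r_1^{p²+1} − r_2^{p+1} + r_1^p r_3)`. -/
theorem Rpoly_eval_eq_dicksonC4_mul (p : ℕ) [Fact p.Prime] (hodd : Odd p) :
    (∀ j ≤ 4,
        MvPolynomial.aeval (fun i : Fin 4 => rElt p ((i : ℕ) + 1)) (Rpoly p j) =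
          dicksonC4 p j *
            MvPolynomial.aeval (fun i : Fin 4 => rElt p ((i : ℕ) + 1)) (Rpoly p 4)) ∧
      rElt p 1 ^ p * rElt p 4 + rElt p 1 * rElt p 2 ^ p ^ 2 - rElt p 2 * rElt p 3 ^ p =
        dicksonC4 p 3 *
          (rElt p 1 ^ (p ^ 2 + 1) - rElt p 2 ^ (p + 1) + rElt p 1 ^ p * rElt p 3) := by
  have hforall := Statement19Aux.forall_Q p
  constructor
  · exact hforall
  · have h3 := hforall 3 (by norm_num)
    have e3 : Statement19Aux.Q p 3 = rElt p 1 * rElt p 2 ^ p ^ 2 - rElt p 2 * rElt p 3 ^ p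
        + rElt p 1 ^ p * rElt p 4 := by
      simp [Statement19Aux.Q, Rpoly, show ((2 : Fin 4) : ℕ) = 2 from rfl,
        show ((3 : Fin 4) : ℕ) = 3 from rfl]
    have e4 : Statement19Aux.Q p 4 = rElt p 1 ^ (p ^ 2 + 1) - rElt p 2 ^ (p + 1)
        + rElt p 1 ^ p * rElt p 3 := by
      simp [Statement19Aux.Q, Rpoly, show ((2 : Fin 4) : ℕ) = 2 from rfl]
    rw [e3, e4] at h3
    linear_combination h3
end
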